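/- arXiv:1006.1841 — 7 statements merged into one kernel-verified Lean document; each statement's English description precedes it below -/
import Mathlib

section
/- Let f : Ω → ℝ be a nonvanishing real-valued C² function on an open set Ω ⊆ ℝ², and set q = Δf/f. Then for every real-valued C² function φ on Ω one has V₁(V̄φ) = ¼(Δ − q)φ and V̄₁(Vφ) = ¼(Δ − q)φ, where V, V̄, V₁, V̄₁ are the Vekua-type operators built from f. -/
noncomputable section

/-- Points of the plane ℝ². -/
abbrev P2 := EuclideanSpace ℝ (Fin 2)

/-- Partial derivatives ∂ₓ, ∂_y of a complex-valued function on the plane. -/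
def pdx (F : P2 → ℂ) : P2 → ℂ := fun p => fderiv ℝ F p (EuclideanSpace.single 0 1)
def pdy (F : P2 → ℂ) : P2 → ℂ := fun p => fderiv ℝ F p (EuclideanSpace.single 1 1)

/-- ∂_z = ½(∂ₓ − i∂_y). -/
def dz (F : P2 → ℂ) : P2 → ℂ := fun p => (pdx F p - Complex.I * pdy F p) / 2

/-- ∂_z̄ = ½(∂ₓ + i∂_y). -/
def dzbar (F : P2 → ℂ) : P2 → ℂ := fun p => (pdx F p + Complex.I * pdy F p) / 2

/-- The Laplacian Δ = ∂ₓ² + ∂_y². -/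
def lap2 (F : P2 → ℂ) : P2 → ℂ := fun p => pdx (pdx F) p + pdy (pdy F) p

/-- V = ∂_z̄ − (∂_z̄ f/f) C. -/
def Vop (f W : P2 → ℂ) : P2 → ℂ :=
  fun p => dzbar W p - (dzbar f p / f p) * (starRingEnd ℂ) (W p)

/-- V̄ = ∂_z − (∂_z f/f) C. -/
def Vbarop (f W : P2 → ℂ) : P2 → ℂ :=
  fun p => dz W p - (dz f p / f p) * (starRingEnd ℂ) (W p)

/-- V₁ = ∂_z̄ + (∂_z f/f) C. -/
def V1op (f W : P2 → ℂ) : P2 → ℂ :=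
  fun p => dzbar W p + (dz f p / f p) * (starRingEnd ℂ) (W p)

/-- V̄₁ = ∂_z + (∂_z̄ f/f) C. -/
def Vbar1op (f W : P2 → ℂ) : P2 → ℂ :=
  fun p => dz W p + (dzbar f p / f p) * (starRingEnd ℂ) (W p)

lemma castHasFDeriv {u : P2 → ℝ} {u' : P2 →L[ℝ] ℝ} {p : P2} (h : HasFDerivAt u u' p) :
    HasFDerivAt (fun x => (u x : ℂ)) (Complex.ofRealCLM.comp u') p :=
  Complex.ofRealCLM.hasFDerivAt.comp p h

lemma partialHasFDeriv {u : P2 → ℝ} {p : P2} (h : ContDiffAt ℝ 2 u p) (v : P2) :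
    HasFDerivAt (fun x => fderiv ℝ u x v)
      ((ContinuousLinearMap.apply ℝ ℝ v).comp (fderiv ℝ (fderiv ℝ u) p)) p :=
  (ContinuousLinearMap.apply ℝ ℝ v).hasFDerivAt.comp p
    (((h.fderiv_right (m := 1) (by norm_num)).differentiableAt one_ne_zero).hasFDerivAt)

local notation "E₀" => (EuclideanSpace.single (0 : Fin 2) (1:ℝ))
local notation "E₁" => (EuclideanSpace.single (1 : Fin 2) (1:ℝ))

set_option maxHeartbeats 2000000 in
/-- factorization of the stationary Schrödinger operator,
    ¼(Δ − q)φ = V₁V̄φ = V̄₁Vφ with q = Δf/f. -/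
theorem statement0 (Ω : Set P2) (hΩ : IsOpen Ω)
    (f : P2 → ℝ) (hf : ContDiffOn ℝ 2 f Ω) (hf0 : ∀ p ∈ Ω, f p ≠ 0)
    (φ : P2 → ℝ) (hφ : ContDiffOn ℝ 2 φ Ω) :
    ∀ p ∈ Ω,
      V1op (fun x => (f x : ℂ)) (Vbarop (fun x => (f x : ℂ)) (fun x => (φ x : ℂ))) p
        = (lap2 (fun x => (φ x : ℂ)) p
            - (lap2 (fun x => (f x : ℂ)) p / (f p : ℂ)) * (φ p : ℂ)) / 4 ∧
      Vbar1op (fun x => (f x : ℂ)) (Vop (fun x => (f x : ℂ)) (fun x => (φ x : ℂ))) p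
        = (lap2 (fun x => (φ x : ℂ)) p
            - (lap2 (fun x => (f x : ℂ)) p / (f p : ℂ)) * (φ p : ℂ)) / 4 := by
  intro p hp
  have hmem : Ω ∈ nhds p := hΩ.mem_nhds hp
  have hfp : ContDiffAt ℝ 2 f p := hf.contDiffAt hmem
  have hφp : ContDiffAt ℝ 2 φ p := hφ.contDiffAt hmem
  have hdf : DifferentiableAt ℝ f p := hfp.differentiableAt (by norm_num)
  have hdφ : DifferentiableAt ℝ φ p := hφp.differentiableAt (by norm_num)
  have ha0 : ((f p : ℝ) : ℂ) ≠ 0 := Complex.ofReal_ne_zero.2 (hf0 p hp)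
  -- basic derivatives
  have hCf := castHasFDeriv hdf.hasFDerivAt
  have hCφ := castHasFDeriv hdφ.hasFDerivAt
  have hFx := castHasFDeriv (partialHasFDeriv hfp E₀)
  have hFy := castHasFDeriv (partialHasFDeriv hfp E₁)
  have hPx := castHasFDeriv (partialHasFDeriv hφp E₀)
  have hPy := castHasFDeriv (partialHasFDeriv hφp E₁)
  have hInv : HasFDerivAt (fun x => ((f x : ℝ) : ℂ)⁻¹)
      ((-ContinuousLinearMap.mulLeftRight ℝ ℂ ((f p : ℂ))⁻¹ ((f p : ℂ))⁻¹).comp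
        (Complex.ofRealCLM.comp (fderiv ℝ f p))) p :=
    (hasFDerivAt_inv' ha0).comp p hCf
  -- cast partials on Ω
  have hcastf : ∀ x ∈ Ω, fderiv ℝ (fun y => ((f y : ℝ) : ℂ)) x
      = Complex.ofRealCLM.comp (fderiv ℝ f x) := by
    intro x hx
    exact (castHasFDeriv ((hf.contDiffAt (hΩ.mem_nhds hx)).differentiableAt
      (by norm_num)).hasFDerivAt).fderiv
  have hcastφ : ∀ x ∈ Ω, fderiv ℝ (fun y => ((φ y : ℝ) : ℂ)) x
      = Complex.ofRealCLM.comp (fderiv ℝ φ x) := by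
    intro x hx
    exact (castHasFDeriv ((hφ.contDiffAt (hΩ.mem_nhds hx)).differentiableAt
      (by norm_num)).hasFDerivAt).fderiv
  -- Laplacian values
  have hlapφ : lap2 (fun x => ((φ x : ℝ) : ℂ)) p
      = ((fderiv ℝ (fderiv ℝ φ) p E₀ E₀ : ℝ) : ℂ)
        + ((fderiv ℝ (fderiv ℝ φ) p E₁ E₁ : ℝ) : ℂ) := by
    have h0 : pdx (fun x => ((φ x : ℝ) : ℂ)) =ᶠ[nhds p]
        (fun x => ((fderiv ℝ φ x E₀ : ℝ) : ℂ)) := by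
      filter_upwards [hmem] with x hx
      simp [pdx, hcastφ x hx]
    have h1 : pdy (fun x => ((φ x : ℝ) : ℂ)) =ᶠ[nhds p]
        (fun x => ((fderiv ℝ φ x E₁ : ℝ) : ℂ)) := by
      filter_upwards [hmem] with x hx
      simp [pdy, hcastφ x hx]
    simp only [lap2, pdx, pdy, h0.fderiv_eq, h1.fderiv_eq, hPx.fderiv, hPy.fderiv]
    simp
  have hlapf : lap2 (fun x => ((f x : ℝ) : ℂ)) p
      = ((fderiv ℝ (fderiv ℝ f) p E₀ E₀ : ℝ) : ℂ)
        + ((fderiv ℝ (fderiv ℝ f) p E₁ E₁ : ℝ) : ℂ) := by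
    have h0 : pdx (fun x => ((f x : ℝ) : ℂ)) =ᶠ[nhds p]
        (fun x => ((fderiv ℝ f x E₀ : ℝ) : ℂ)) := by
      filter_upwards [hmem] with x hx
      simp [pdx, hcastf x hx]
    have h1 : pdy (fun x => ((f x : ℝ) : ℂ)) =ᶠ[nhds p]
        (fun x => ((fderiv ℝ f x E₁ : ℝ) : ℂ)) := by
      filter_upwards [hmem] with x hx
      simp [pdy, hcastf x hx]
    simp only [lap2, pdx, pdy, h0.fderiv_eq, h1.fderiv_eq, hFx.fderiv, hFy.fderiv]
    simp
  -- symmetry of second derivatives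
  have hsymf : fderiv ℝ (fderiv ℝ f) p E₁ E₀ = fderiv ℝ (fderiv ℝ f) p E₀ E₁ :=
    (hfp.isSymmSndFDerivAt (by simp [minSmoothness_of_isRCLikeNormedField])).eq _ _
  have hsymφ : fderiv ℝ (fderiv ℝ φ) p E₁ E₀ = fderiv ℝ (fderiv ℝ φ) p E₀ E₁ :=
    (hφp.isSymmSndFDerivAt (by simp [minSmoothness_of_isRCLikeNormedField])).eq _ _
  constructor
  · -- V₁ V̄ φ
    set G : P2 → ℂ := fun x =>
      (2⁻¹ : ℂ) * (((fderiv ℝ φ x E₀ : ℝ) : ℂ) - Complex.I * ((fderiv ℝ φ x E₁ : ℝ) : ℂ))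
      - (2⁻¹ : ℂ) * ((((fderiv ℝ f x E₀ : ℝ) : ℂ) - Complex.I * ((fderiv ℝ f x E₁ : ℝ) : ℂ))
          * ((f x : ℂ))⁻¹ * ((φ x : ℝ) : ℂ)) with hGdef
    have hWeq : Vbarop (fun x => ((f x : ℝ) : ℂ)) (fun x => ((φ x : ℝ) : ℂ)) =ᶠ[nhds p] G := by
      filter_upwards [hmem] with x hx
      simp only [Vbarop, dz, pdx, pdy, hcastf x hx, hcastφ x hx, hGdef,
        ContinuousLinearMap.comp_apply, Complex.ofRealCLM_apply, Complex.conj_ofReal]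
      rw [div_eq_mul_inv, div_eq_mul_inv]
      ring
    have hG : HasFDerivAt G
        ((2⁻¹ : ℂ) • ((Complex.ofRealCLM.comp ((ContinuousLinearMap.apply ℝ ℝ E₀).comp
              (fderiv ℝ (fderiv ℝ φ) p)))
            - Complex.I • (Complex.ofRealCLM.comp ((ContinuousLinearMap.apply ℝ ℝ E₁).comp
              (fderiv ℝ (fderiv ℝ φ) p))))
          - (2⁻¹ : ℂ) • _) p :=
      ((hPx.sub (hPy.const_mul Complex.I)).const_mul (2⁻¹ : ℂ)).sub
        ((((hFx.sub (hFy.const_mul Complex.I)).mul hInv).mul hCφ).const_mul (2⁻¹ : ℂ))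
    have hfdW := hWeq.fderiv_eq.trans hG.fderiv
    have hWp := hWeq.self_of_nhds
    simp only [V1op, dzbar, dz, pdx, pdy, hfdW, hWp, hlapφ, hlapf, hCf.fderiv, hGdef]
    simp only [ContinuousLinearMap.coe_sub', ContinuousLinearMap.coe_smul',
      Pi.sub_apply, Pi.smul_apply, Pi.mul_apply, Pi.add_apply, ContinuousLinearMap.add_apply,
      ContinuousLinearMap.smul_apply, ContinuousLinearMap.comp_apply,
      ContinuousLinearMap.neg_apply, ContinuousLinearMap.mulLeftRight_apply,
      ContinuousLinearMap.apply_apply, Complex.ofRealCLM_apply, smul_eq_mul,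
      map_sub, map_mul, map_add, map_inv₀, Complex.conj_ofReal, Complex.conj_I, map_ofNat]
    rw [hsymf, hsymφ]
    linear_combination ((-1/4:ℂ) * ((fderiv ℝ (fderiv ℝ φ) p (EuclideanSpace.single 1 1) (EuclideanSpace.single 1 1) : ℝ) : ℂ)
        + (1/4:ℂ) * (((f p : ℝ) : ℂ))⁻¹ * ((φ p : ℝ) : ℂ)
          * ((fderiv ℝ (fderiv ℝ f) p (EuclideanSpace.single 1 1) (EuclideanSpace.single 1 1) : ℝ) : ℂ)) * Complex.I_sq
  · -- V̄₁ V φ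
    set G : P2 → ℂ := fun x =>
      (2⁻¹ : ℂ) * (((fderiv ℝ φ x E₀ : ℝ) : ℂ) + Complex.I * ((fderiv ℝ φ x E₁ : ℝ) : ℂ))
      - (2⁻¹ : ℂ) * ((((fderiv ℝ f x E₀ : ℝ) : ℂ) + Complex.I * ((fderiv ℝ f x E₁ : ℝ) : ℂ))
          * ((f x : ℂ))⁻¹ * ((φ x : ℝ) : ℂ)) with hGdef
    have hWeq : Vop (fun x => ((f x : ℝ) : ℂ)) (fun x => ((φ x : ℝ) : ℂ)) =ᶠ[nhds p] G := by
      filter_upwards [hmem] with x hx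
      simp only [Vop, dzbar, pdx, pdy, hcastf x hx, hcastφ x hx, hGdef,
        ContinuousLinearMap.comp_apply, Complex.ofRealCLM_apply, Complex.conj_ofReal]
      rw [div_eq_mul_inv, div_eq_mul_inv]
      ring
    have hG : HasFDerivAt G
        ((2⁻¹ : ℂ) • ((Complex.ofRealCLM.comp ((ContinuousLinearMap.apply ℝ ℝ E₀).comp
              (fderiv ℝ (fderiv ℝ φ) p)))
            + Complex.I • (Complex.ofRealCLM.comp ((ContinuousLinearMap.apply ℝ ℝ E₁).comp
              (fderiv ℝ (fderiv ℝ φ) p))))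
          - (2⁻¹ : ℂ) • _) p :=
      ((hPx.add (hPy.const_mul Complex.I)).const_mul (2⁻¹ : ℂ)).sub
        ((((hFx.add (hFy.const_mul Complex.I)).mul hInv).mul hCφ).const_mul (2⁻¹ : ℂ))
    have hfdW := hWeq.fderiv_eq.trans hG.fderiv
    have hWp := hWeq.self_of_nhds
    simp only [Vbar1op, dzbar, dz, pdx, pdy, hfdW, hWp, hlapφ, hlapf, hCf.fderiv, hGdef]
    simp only [ContinuousLinearMap.coe_sub', ContinuousLinearMap.coe_smul',
      Pi.sub_apply, Pi.smul_apply, Pi.mul_apply, Pi.add_apply, ContinuousLinearMap.add_apply,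
      ContinuousLinearMap.smul_apply, ContinuousLinearMap.comp_apply,
      ContinuousLinearMap.neg_apply, ContinuousLinearMap.mulLeftRight_apply,
      ContinuousLinearMap.apply_apply, Complex.ofRealCLM_apply, smul_eq_mul,
      map_sub, map_mul, map_add, map_inv₀, Complex.conj_ofReal, Complex.conj_I, map_ofNat]
    rw [hsymf, hsymφ]
    linear_combination ((-1/4:ℂ) * ((fderiv ℝ (fderiv ℝ φ) p (EuclideanSpace.single 1 1) (EuclideanSpace.single 1 1) : ℝ) : ℂ)
        + (1/4:ℂ) * (((f p : ℝ) : ℂ))⁻¹ * ((φ p : ℝ) : ℂ)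
          * ((fderiv ℝ (fderiv ℝ f) p (EuclideanSpace.single 1 1) (EuclideanSpace.single 1 1) : ℝ) : ℂ)) * Complex.I_sq
end
end

section
/- Let f : Ω → ℝ be a nonvanishing real-valued C² function on an open set Ω ⊆ ℝ², set q = Δf/f and r = 2((∂_x f)² + (∂_y f)²)/f² − q. Let W₁ be a real-valued C² solution of (−Δ + q)W₁ = 0 on Ω, and let W₂ be a real-valued C² function satisfying ∂_z̄(fW₂) = i f² ∂_z̄(f⁻¹W₁) on Ω. Then W = W₁ + iW₂ satisfies the Vekua equation VW = 0, and consequently W₂ satisfies (−Δ + r)W₂ = 0. -/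
noncomputable section

/-! ### Auxiliary real partial derivatives -/

/-- Real partial derivatives ∂ₓ, ∂_y of a real-valued function on the plane. -/
def pdxr (g : P2 → ℝ) : P2 → ℝ := fun p => fderiv ℝ g p (EuclideanSpace.single 0 1)
def pdyr (g : P2 → ℝ) : P2 → ℝ := fun p => fderiv ℝ g p (EuclideanSpace.single 1 1)

lemma ofReal_diffAt {g : P2 → ℝ} {p : P2} (hg : DifferentiableAt ℝ g p) :
    DifferentiableAt ℝ (fun x => (g x : ℂ)) p :=
  Complex.ofRealCLM.differentiableAt.comp p hg

lemma pdx_ofReal {g : P2 → ℝ} {p : P2} (hg : DifferentiableAt ℝ g p) :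
    pdx (fun x => (g x : ℂ)) p = (pdxr g p : ℂ) := by
  have h : (fun x => (g x : ℂ)) = (Complex.ofRealCLM : ℝ →L[ℝ] ℂ) ∘ g := rfl
  rw [pdx, h, (Complex.ofRealCLM.hasFDerivAt.comp p hg.hasFDerivAt).fderiv]
  rfl

lemma pdy_ofReal {g : P2 → ℝ} {p : P2} (hg : DifferentiableAt ℝ g p) :
    pdy (fun x => (g x : ℂ)) p = (pdyr g p : ℂ) := by
  have h : (fun x => (g x : ℂ)) = (Complex.ofRealCLM : ℝ →L[ℝ] ℂ) ∘ g := rfl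
  rw [pdy, h, (Complex.ofRealCLM.hasFDerivAt.comp p hg.hasFDerivAt).fderiv]
  rfl

lemma pdxr_mul {g h : P2 → ℝ} {p : P2} (hg : DifferentiableAt ℝ g p)
    (hh : DifferentiableAt ℝ h p) :
    pdxr (fun x => g x * h x) p = pdxr g p * h p + g p * pdxr h p := by
  unfold pdxr
  rw [fderiv_fun_mul hg hh]
  simp
  ring

lemma pdyr_mul {g h : P2 → ℝ} {p : P2} (hg : DifferentiableAt ℝ g p)
    (hh : DifferentiableAt ℝ h p) :
    pdyr (fun x => g x * h x) p = pdyr g p * h p + g p * pdyr h p := by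
  unfold pdyr
  rw [fderiv_fun_mul hg hh]
  simp
  ring

lemma pdxr_add {g h : P2 → ℝ} {p : P2} (hg : DifferentiableAt ℝ g p)
    (hh : DifferentiableAt ℝ h p) :
    pdxr (fun x => g x + h x) p = pdxr g p + pdxr h p := by
  unfold pdxr
  rw [fderiv_fun_add hg hh]
  simp

lemma pdyr_add {g h : P2 → ℝ} {p : P2} (hg : DifferentiableAt ℝ g p)
    (hh : DifferentiableAt ℝ h p) :
    pdyr (fun x => g x + h x) p = pdyr g p + pdyr h p := by
  unfold pdyr
  rw [fderiv_fun_add hg hh]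
  simp

lemma pdxr_neg {g : P2 → ℝ} {p : P2} :
    pdxr (fun x => -(g x)) p = -(pdxr g p) := by
  unfold pdxr
  rw [fderiv_fun_neg]
  simp

lemma pd_clm {g : P2 → ℝ} {p : P2} (hg : ContDiffAt ℝ 2 g p) (v w : P2) :
    fderiv ℝ (fun q => fderiv ℝ g q w) p v = fderiv ℝ (fderiv ℝ g) p v w := by
  have hd : DifferentiableAt ℝ (fderiv ℝ g) p :=
    (hg.fderiv_right (m := 1) (le_refl 2)).differentiableAt one_ne_zero
  rw [fderiv_clm_apply hd (differentiableAt_const _)]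
  simp

lemma clairaut {g : P2 → ℝ} {p : P2} (hg : ContDiffAt ℝ 2 g p) :
    pdxr (pdyr g) p = pdyr (pdxr g) p := by
  have hsymm := hg.isSymmSndFDerivAt (by simp [minSmoothness_of_isRCLikeNormedField])
  unfold pdxr pdyr
  rw [pd_clm hg, pd_clm hg]
  exact hsymm _ _

lemma diffAt_pdxr {g : P2 → ℝ} {p : P2} (hg : ContDiffAt ℝ 2 g p) :
    DifferentiableAt ℝ (pdxr g) p := by
  have h2 : ContDiffAt ℝ 1 (fderiv ℝ g) p := hg.fderiv_right (le_refl 2)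
  exact (h2.differentiableAt one_ne_zero).clm_apply (differentiableAt_const _)

lemma diffAt_pdyr {g : P2 → ℝ} {p : P2} (hg : ContDiffAt ℝ 2 g p) :
    DifferentiableAt ℝ (pdyr g) p := by
  have h2 : ContDiffAt ℝ 1 (fderiv ℝ g) p := hg.fderiv_right (le_refl 2)
  exact (h2.differentiableAt one_ne_zero).clm_apply (differentiableAt_const _)


lemma pdxr_congr_nhds {g h : P2 → ℝ} {p : P2} (hev : g =ᶠ[nhds p] h) :
    pdxr g p = pdxr h p := by
  unfold pdxr
  rw [hev.fderiv_eq]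

lemma pdyr_congr_nhds {g h : P2 → ℝ} {p : P2} (hev : g =ᶠ[nhds p] h) :
    pdyr g p = pdyr h p := by
  unfold pdyr
  rw [hev.fderiv_eq]

lemma pdx_congr_nhds {g h : P2 → ℂ} {p : P2} (hev : g =ᶠ[nhds p] h) :
    pdx g p = pdx h p := by
  unfold pdx
  rw [hev.fderiv_eq]

lemma pdy_congr_nhds {g h : P2 → ℂ} {p : P2} (hev : g =ᶠ[nhds p] h) :
    pdy g p = pdy h p := by
  unfold pdy
  rw [hev.fderiv_eq]

/-- conjugate "metaharmonic" construction: if W₁ solves (−Δ+q)W₁ = 0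
    and W₂ satisfies ∂_z̄(fW₂) = i f² ∂_z̄(f⁻¹W₁), then W = W₁ + iW₂ solves VW = 0
    and W₂ solves (−Δ+r)W₂ = 0. -/
theorem statement2 (Ω : Set P2) (hΩ : IsOpen Ω)
    (f : P2 → ℝ) (hf : ContDiffOn ℝ 2 f Ω) (hf0 : ∀ p ∈ Ω, f p ≠ 0)
    (W₁ W₂ : P2 → ℝ) (hW₁ : ContDiffOn ℝ 2 W₁ Ω) (hW₂ : ContDiffOn ℝ 2 W₂ Ω)
    (hSchr : ∀ p ∈ Ω,
      -(lap2 (fun x => (W₁ x : ℂ)) p)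
        + (lap2 (fun x => (f x : ℂ)) p / (f p : ℂ)) * (W₁ p : ℂ) = 0)
    (hConj : ∀ p ∈ Ω,
      dzbar (fun x => (f x : ℂ) * (W₂ x : ℂ)) p
        = Complex.I * (f p : ℂ) ^ 2 * dzbar (fun x => (W₁ x : ℂ) / (f x : ℂ)) p) :
    ∀ p ∈ Ω,
      (Vop (fun x => (f x : ℂ)) (fun x => (W₁ x : ℂ) + Complex.I * (W₂ x : ℂ)) p = 0) ∧
      (-(lap2 (fun x => (W₂ x : ℂ)) p)
        + (2 * ((pdx (fun x => (f x : ℂ)) p) ^ 2 + (pdy (fun x => (f x : ℂ)) p) ^ 2)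
              / (f p : ℂ) ^ 2
            - lap2 (fun x => (f x : ℂ)) p / (f p : ℂ)) * (W₂ p : ℂ) = 0) := by
  classical
  set u : P2 → ℝ := fun x => f x * W₂ x with hu_def
  set v : P2 → ℝ := fun x => W₁ x / f x with hv_def
  have huC : ContDiffOn ℝ 2 u Ω := hf.mul hW₂
  have hvC : ContDiffOn ℝ 2 v Ω := hW₁.div hf hf0
  -- C² at each point of Ω
  have hfAt : ∀ q ∈ Ω, ContDiffAt ℝ 2 f q := fun q hq => hf.contDiffAt (hΩ.mem_nhds hq)
  have hW₁At : ∀ q ∈ Ω, ContDiffAt ℝ 2 W₁ q := fun q hq => hW₁.contDiffAt (hΩ.mem_nhds hq)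
  have hW₂At : ∀ q ∈ Ω, ContDiffAt ℝ 2 W₂ q := fun q hq => hW₂.contDiffAt (hΩ.mem_nhds hq)
  have huAt : ∀ q ∈ Ω, ContDiffAt ℝ 2 u q := fun q hq => huC.contDiffAt (hΩ.mem_nhds hq)
  have hvAt : ∀ q ∈ Ω, ContDiffAt ℝ 2 v q := fun q hq => hvC.contDiffAt (hΩ.mem_nhds hq)
  have one_le_two : (2 : WithTop ℕ∞) ≠ 0 := by norm_num
  have hfD : ∀ q ∈ Ω, DifferentiableAt ℝ f q :=
    fun q hq => (hfAt q hq).differentiableAt one_le_two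
  have hW₁D : ∀ q ∈ Ω, DifferentiableAt ℝ W₁ q :=
    fun q hq => (hW₁At q hq).differentiableAt one_le_two
  have hW₂D : ∀ q ∈ Ω, DifferentiableAt ℝ W₂ q :=
    fun q hq => (hW₂At q hq).differentiableAt one_le_two
  have huD : ∀ q ∈ Ω, DifferentiableAt ℝ u q :=
    fun q hq => (huAt q hq).differentiableAt one_le_two
  have hvD : ∀ q ∈ Ω, DifferentiableAt ℝ v q :=
    fun q hq => (hvAt q hq).differentiableAt one_le_two
  -- the key pointwise relation extracted from hConj
  have key : ∀ q ∈ Ω, pdxr u q = -(f q * f q * pdyr v q)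
      ∧ pdyr u q = f q * f q * pdxr v q := by
    intro q hq
    have h := hConj q hq
    have e2 : (fun x => (f x : ℂ) * (W₂ x : ℂ)) = fun x => ((u x : ℝ) : ℂ) := by
      funext x; simp [hu_def]
    have e3 : (fun x => (W₁ x : ℂ) / (f x : ℂ)) = fun x => ((v x : ℝ) : ℂ) := by
      funext x; simp [hv_def]
    rw [e2, e3, dzbar, dzbar, pdx_ofReal (huD q hq), pdy_ofReal (huD q hq),
      pdx_ofReal (hvD q hq), pdy_ofReal (hvD q hq)] at h
    rw [Complex.ext_iff] at h
    obtain ⟨h1, h2⟩ := h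
    simp [Complex.div_re, Complex.div_im, Complex.mul_re, Complex.mul_im,
      ← Complex.ofReal_pow] at h1 h2
    constructor <;> nlinarith [h1, h2, sq_nonneg (f q)]
  -- product-rule expansions of the derivatives of u, valid on all of Ω
  have uexp_x : ∀ q ∈ Ω, pdxr u q = pdxr f q * W₂ q + f q * pdxr W₂ q := by
    intro q hq
    exact pdxr_mul (hfD q hq) (hW₂D q hq)
  have uexp_y : ∀ q ∈ Ω, pdyr u q = pdyr f q * W₂ q + f q * pdyr W₂ q := by
    intro q hq
    exact pdyr_mul (hfD q hq) (hW₂D q hq)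
  intro p hp
  have hfp : f p ≠ 0 := hf0 p hp
  have hfpC : (f p : ℂ) ≠ 0 := by exact_mod_cast hfp
  -- W₁ = f * v on Ω, so we can expand the derivatives of W₁
  have hW1v : ∀ q ∈ Ω, W₁ q = f q * v q := by
    intro q hq
    rw [hv_def]
    field_simp [hf0 q hq]
  have hW1v_ev : W₁ =ᶠ[nhds p] fun q => f q * v q :=
    Filter.eventuallyEq_of_mem (hΩ.mem_nhds hp) hW1v
  have hW1x : pdxr W₁ p = pdxr f p * v p + f p * pdxr v p := by
    have := hW1v_ev.fderiv_eq (𝕜 := ℝ)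
    unfold pdxr
    rw [this]
    exact pdxr_mul (hfD p hp) (hvD p hp)
  have hW1y : pdyr W₁ p = pdyr f p * v p + f p * pdyr v p := by
    have := hW1v_ev.fderiv_eq (𝕜 := ℝ)
    unfold pdyr
    rw [this]
    exact pdyr_mul (hfD p hp) (hvD p hp)
  have hvp : f p * v p = W₁ p := by
    rw [hv_def]; field_simp
  obtain ⟨hD, hE⟩ := key p hp
  have hH : pdxr u p = pdxr f p * W₂ p + f p * pdxr W₂ p := uexp_x p hp
  have hI : pdyr u p = pdyr f p * W₂ p + f p * pdyr W₂ p := uexp_y p hp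
  -- the two real first-order relations
  have S1 : pdxr f p * W₂ p + f p * pdxr W₂ p = pdyr f p * W₁ p - f p * pdyr W₁ p := by
    linear_combination -hH + hD + (f p) * hW1y + pdyr f p * hvp
  have S2 : pdyr f p * W₂ p + f p * pdyr W₂ p = f p * pdxr W₁ p - pdxr f p * W₁ p := by
    linear_combination -hI + hE - (f p) * hW1x - pdxr f p * hvp
  constructor
  · -- Part 1 : the Vekua equation
    have hpxW : pdx (fun x => (W₁ x : ℂ) + Complex.I * (W₂ x : ℂ)) p
        = (pdxr W₁ p : ℂ) + Complex.I * (pdxr W₂ p : ℂ) := by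
      unfold pdx
      rw [fderiv_fun_add (ofReal_diffAt (hW₁D p hp))
        ((ofReal_diffAt (hW₂D p hp)).const_mul Complex.I),
        fderiv_const_mul (ofReal_diffAt (hW₂D p hp))]
      have e1 := pdx_ofReal (hW₁D p hp)
      have e2 := pdx_ofReal (hW₂D p hp)
      unfold pdx at e1 e2
      simp [e1, e2]
    have hpyW : pdy (fun x => (W₁ x : ℂ) + Complex.I * (W₂ x : ℂ)) p
        = (pdyr W₁ p : ℂ) + Complex.I * (pdyr W₂ p : ℂ) := by
      unfold pdy
      rw [fderiv_fun_add (ofReal_diffAt (hW₁D p hp))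
        ((ofReal_diffAt (hW₂D p hp)).const_mul Complex.I),
        fderiv_const_mul (ofReal_diffAt (hW₂D p hp))]
      have e1 := pdy_ofReal (hW₁D p hp)
      have e2 := pdy_ofReal (hW₂D p hp)
      unfold pdy at e1 e2
      simp [e1, e2]
    have S1c : (pdxr f p : ℂ) * (W₂ p : ℂ) + (f p : ℂ) * (pdxr W₂ p : ℂ)
        = (pdyr f p : ℂ) * (W₁ p : ℂ) - (f p : ℂ) * (pdyr W₁ p : ℂ) := by
      exact_mod_cast congrArg Complex.ofReal S1
    have S2c : (pdyr f p : ℂ) * (W₂ p : ℂ) + (f p : ℂ) * (pdyr W₂ p : ℂ)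
        = (f p : ℂ) * (pdxr W₁ p : ℂ) - (pdxr f p : ℂ) * (W₁ p : ℂ) := by
      exact_mod_cast congrArg Complex.ofReal S2
    rw [Vop, dzbar, dzbar, hpxW, hpyW, pdx_ofReal (hfD p hp), pdy_ofReal (hfD p hp)]
    rw [show (starRingEnd ℂ) ((W₁ p : ℂ) + Complex.I * (W₂ p : ℂ))
        = (W₁ p : ℂ) - Complex.I * (W₂ p : ℂ) by
      simp [Complex.conj_ofReal, Complex.conj_I]; ring]
    field_simp
    linear_combination Complex.I * S1c - S2c
      + ((pdyr W₂ p : ℂ) * (f p : ℂ) + (pdyr f p : ℂ) * (W₂ p : ℂ)) * Complex.I_sq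
  · -- Part 2 : the Schrödinger equation for W₂
    -- second derivatives of u computed two ways
    have hxevK : pdxr u =ᶠ[nhds p] fun q => -(f q * f q * pdyr v q) :=
      Filter.eventuallyEq_of_mem (hΩ.mem_nhds hp) (fun q hq => (key q hq).1)
    have hyevK : pdyr u =ᶠ[nhds p] fun q => f q * f q * pdxr v q :=
      Filter.eventuallyEq_of_mem (hΩ.mem_nhds hp) (fun q hq => (key q hq).2)
    have hff_diff : DifferentiableAt ℝ (fun q => f q * f q) p := (hfD p hp).mul (hfD p hp)
    have hff_x : pdxr (fun q => f q * f q) p = pdxr f p * f p + f p * pdxr f p :=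
      pdxr_mul (hfD p hp) (hfD p hp)
    have hff_y : pdyr (fun q => f q * f q) p = pdyr f p * f p + f p * pdyr f p :=
      pdyr_mul (hfD p hp) (hfD p hp)
    have hA : pdxr (pdxr u) p
        = -((pdxr f p * f p + f p * pdxr f p) * pdyr v p
            + (f p * f p) * pdxr (pdyr v) p) := by
      have h1 : pdxr (pdxr u) p = pdxr (fun q => -(f q * f q * pdyr v q)) p :=
        pdxr_congr_nhds hxevK
      rw [h1, pdxr_neg,
        pdxr_mul hff_diff (diffAt_pdyr (hvAt p hp)), hff_x]
    have hB : pdyr (pdyr u) p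
        = (pdyr f p * f p + f p * pdyr f p) * pdxr v p
            + (f p * f p) * pdyr (pdxr v) p := by
      have h1 : pdyr (pdyr u) p = pdyr (fun q => f q * f q * pdxr v q) p :=
        pdyr_congr_nhds hyevK
      rw [h1, pdyr_mul hff_diff (diffAt_pdxr (hvAt p hp)), hff_y]
    have hC : pdxr (pdyr v) p = pdyr (pdxr v) p := clairaut (hvAt p hp)
    have hxevU : pdxr u =ᶠ[nhds p] fun q => pdxr f q * W₂ q + f q * pdxr W₂ q :=
      Filter.eventuallyEq_of_mem (hΩ.mem_nhds hp) uexp_x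
    have hyevU : pdyr u =ᶠ[nhds p] fun q => pdyr f q * W₂ q + f q * pdyr W₂ q :=
      Filter.eventuallyEq_of_mem (hΩ.mem_nhds hp) uexp_y
    have hF : pdxr (pdxr u) p
        = (pdxr (pdxr f) p * W₂ p + pdxr f p * pdxr W₂ p)
          + (pdxr f p * pdxr W₂ p + f p * pdxr (pdxr W₂) p) := by
      have h1 : pdxr (pdxr u) p
          = pdxr (fun q => pdxr f q * W₂ q + f q * pdxr W₂ q) p :=
        pdxr_congr_nhds hxevU
      rw [h1, pdxr_add (g := fun q => pdxr f q * W₂ q) (h := fun q => f q * pdxr W₂ q) ((diffAt_pdxr (hfAt p hp)).mul (hW₂D p hp))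
          ((hfD p hp).mul (diffAt_pdxr (hW₂At p hp))),
        pdxr_mul (diffAt_pdxr (hfAt p hp)) (hW₂D p hp),
        pdxr_mul (hfD p hp) (diffAt_pdxr (hW₂At p hp))]
    have hG : pdyr (pdyr u) p
        = (pdyr (pdyr f) p * W₂ p + pdyr f p * pdyr W₂ p)
          + (pdyr f p * pdyr W₂ p + f p * pdyr (pdyr W₂) p) := by
      have h1 : pdyr (pdyr u) p
          = pdyr (fun q => pdyr f q * W₂ q + f q * pdyr W₂ q) p :=
        pdyr_congr_nhds hyevU
      rw [h1, pdyr_add (g := fun q => pdyr f q * W₂ q) (h := fun q => f q * pdyr W₂ q) ((diffAt_pdyr (hfAt p hp)).mul (hW₂D p hp))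
          ((hfD p hp).mul (diffAt_pdyr (hW₂At p hp))),
        pdyr_mul (diffAt_pdyr (hfAt p hp)) (hW₂D p hp),
        pdyr_mul (hfD p hp) (diffAt_pdyr (hW₂At p hp))]
    -- step computation
    have step1 : pdxr (pdxr u) p + pdyr (pdyr u) p
        = -((pdxr f p * f p + f p * pdxr f p) * pdyr v p)
          + (pdyr f p * f p + f p * pdyr f p) * pdxr v p := by
      rw [hA, hB, hC]; ring
    have step2 : f p * (pdxr (pdxr u) p + pdyr (pdyr u) p)
        = 2 * pdxr f p * pdxr u p + 2 * pdyr f p * pdyr u p := by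
      rw [step1, hD, hE]; ring
    have main : f p * f p * (pdxr (pdxr W₂) p + pdyr (pdyr W₂) p)
        + f p * (pdxr (pdxr f) p + pdyr (pdyr f) p) * W₂ p
        - 2 * (pdxr f p * pdxr f p + pdyr f p * pdyr f p) * W₂ p = 0 := by
      linear_combination step2 - (f p) * hF - (f p) * hG
        + (2 * pdxr f p) * hH + (2 * pdyr f p) * hI
    -- translate the complex goal into real second derivatives
    have lapW₂ : lap2 (fun x => (W₂ x : ℂ)) p
        = ((pdxr (pdxr W₂) p + pdyr (pdyr W₂) p : ℝ) : ℂ) := by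
      have hx : pdx (fun x => (W₂ x : ℂ)) =ᶠ[nhds p] fun q => ((pdxr W₂ q : ℝ) : ℂ) :=
        Filter.eventuallyEq_of_mem (hΩ.mem_nhds hp) (fun q hq => pdx_ofReal (hW₂D q hq))
      have hy : pdy (fun x => (W₂ x : ℂ)) =ᶠ[nhds p] fun q => ((pdyr W₂ q : ℝ) : ℂ) :=
        Filter.eventuallyEq_of_mem (hΩ.mem_nhds hp) (fun q hq => pdy_ofReal (hW₂D q hq))
      have h1 : pdx (pdx (fun x => (W₂ x : ℂ))) p = ((pdxr (pdxr W₂) p : ℝ) : ℂ) := by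
        rw [pdx_congr_nhds hx]
        exact pdx_ofReal (diffAt_pdxr (hW₂At p hp))
      have h2 : pdy (pdy (fun x => (W₂ x : ℂ))) p = ((pdyr (pdyr W₂) p : ℝ) : ℂ) := by
        rw [pdy_congr_nhds hy]
        exact pdy_ofReal (diffAt_pdyr (hW₂At p hp))
      rw [lap2, h1, h2]
      push_cast
      ring
    have lapf : lap2 (fun x => (f x : ℂ)) p
        = ((pdxr (pdxr f) p + pdyr (pdyr f) p : ℝ) : ℂ) := by
      have hx : pdx (fun x => (f x : ℂ)) =ᶠ[nhds p] fun q => ((pdxr f q : ℝ) : ℂ) :=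
        Filter.eventuallyEq_of_mem (hΩ.mem_nhds hp) (fun q hq => pdx_ofReal (hfD q hq))
      have hy : pdy (fun x => (f x : ℂ)) =ᶠ[nhds p] fun q => ((pdyr f q : ℝ) : ℂ) :=
        Filter.eventuallyEq_of_mem (hΩ.mem_nhds hp) (fun q hq => pdy_ofReal (hfD q hq))
      have h1 : pdx (pdx (fun x => (f x : ℂ))) p = ((pdxr (pdxr f) p : ℝ) : ℂ) := by
        rw [pdx_congr_nhds hx]
        exact pdx_ofReal (diffAt_pdxr (hfAt p hp))
      have h2 : pdy (pdy (fun x => (f x : ℂ))) p = ((pdyr (pdyr f) p : ℝ) : ℂ) := by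
        rw [pdy_congr_nhds hy]
        exact pdy_ofReal (diffAt_pdyr (hfAt p hp))
      rw [lap2, h1, h2]
      push_cast
      ring
    have mainC : (f p : ℂ) * (f p : ℂ) * ((pdxr (pdxr W₂) p : ℂ) + (pdyr (pdyr W₂) p : ℂ))
        + (f p : ℂ) * ((pdxr (pdxr f) p : ℂ) + (pdyr (pdyr f) p : ℂ)) * (W₂ p : ℂ)
        - 2 * ((pdxr f p : ℂ) * (pdxr f p : ℂ) + (pdyr f p : ℂ) * (pdyr f p : ℂ))
            * (W₂ p : ℂ) = 0 := by
      exact_mod_cast congrArg Complex.ofReal main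
    rw [lapW₂, lapf, pdx_ofReal (hfD p hp), pdy_ofReal (hfD p hp)]
    push_cast
    field_simp
    linear_combination (-1 : ℂ) * mainC
end
end

section
/- Let f : Ω → ℝ be a nonvanishing real-valued C² function on an open set Ω ⊆ ℝ². If W : Ω → ℂ is a C² solution of the Vekua equation VW = 0, then its derivative Ẇ = V̄W satisfies the successor Vekua equation V₁(V̄W) = 0 on Ω. -/
noncomputable section

open Complex

lemma fdv_mul {g h : P2 → ℂ} {p : P2} (hg : DifferentiableAt ℝ g p)
    (hh : DifferentiableAt ℝ h p) (v : P2) :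
    fderiv ℝ (fun q => g q * h q) p v = fderiv ℝ g p v * h p + g p * fderiv ℝ h p v := by
  rw [fderiv_fun_mul hg hh]
  simp only [ContinuousLinearMap.add_apply, ContinuousLinearMap.coe_smul', Pi.smul_apply,
    smul_eq_mul]
  ring

lemma fdv_conj (g : P2 → ℂ) (p v : P2) :
    fderiv ℝ (fun q => (starRingEnd ℂ) (g q)) p v = (starRingEnd ℂ) (fderiv ℝ g p v) := by
  have h : (fun q => (starRingEnd ℂ) (g q)) = (Complex.conjCLE : ℂ ≃L[ℝ] ℂ) ∘ g := by
    funext q; simp [Complex.conjCLE_apply]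
  rw [h, ContinuousLinearEquiv.comp_fderiv]
  simp [Complex.conjCLE_apply]

lemma pd_contDiffOn {Ω : Set P2} (hΩ : IsOpen Ω) {g : P2 → ℂ}
    (hg : ContDiffOn ℝ 2 g Ω) (v : P2) :
    ContDiffOn ℝ 1 (fun q => fderiv ℝ g q v) Ω := by
  have h1 : ContDiffOn ℝ 1 (fun q => fderiv ℝ g q) Ω :=
    hg.fderiv_of_isOpen hΩ (by norm_num)
  exact h1.clm_apply contDiffOn_const

lemma pd_symm {g : P2 → ℂ} {p : P2} (hg : ContDiffAt ℝ 2 g p) (v w : P2) :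
    fderiv ℝ (fun q => fderiv ℝ g q v) p w = fderiv ℝ (fun q => fderiv ℝ g q w) p v := by
  have hd : DifferentiableAt ℝ (fderiv ℝ g) p :=
    (hg.fderiv_right (m := 1) (by norm_num)).differentiableAt one_ne_zero
  have key : ∀ u : P2, fderiv ℝ (fun q => fderiv ℝ g q u) p
      = ((fderiv ℝ (fderiv ℝ g) p).flip u) := by
    intro u
    have h := fderiv_clm_apply (c := fderiv ℝ g) (u := fun _ => u) hd (differentiableAt_const u)
    rw [h]; ext z; simp
  rw [key v, key w]
  have hs := hg.isSymmSndFDerivAt (by simp)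
  simpa using hs w v

/-- the derivative Ẇ = V̄W of a solution of VW = 0 solves
    the successor Vekua equation V₁Ẇ = 0. -/
theorem statement3 (Ω : Set P2) (hΩ : IsOpen Ω)
    (f : P2 → ℝ) (hf : ContDiffOn ℝ 2 f Ω) (hf0 : ∀ p ∈ Ω, f p ≠ 0)
    (W : P2 → ℂ) (hW : ContDiffOn ℝ 2 W Ω)
    (hVek : ∀ p ∈ Ω, Vop (fun x => (f x : ℂ)) W p = 0) :
    ∀ p ∈ Ω, V1op (fun x => (f x : ℂ)) (Vbarop (fun x => (f x : ℂ)) W) p = 0 := by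
  intro p hp
  have hmem : Ω ∈ nhds p := hΩ.mem_nhds hp
  set F : P2 → ℂ := fun x => ((f x : ℂ)) with hFdef
  set e0 : P2 := EuclideanSpace.single 0 1 with he0
  set e1 : P2 := EuclideanSpace.single 1 1 with he1
  have hFc : ContDiffOn ℝ 2 F Ω := Complex.ofRealCLM.contDiff.comp_contDiffOn hf
  have hF0 : ∀ q ∈ Ω, F q ≠ 0 := by
    intro q hq
    simpa [hFdef] using Complex.ofReal_ne_zero.mpr (hf0 q hq)
  have hFp0 : F p ≠ 0 := hF0 p hp
  have hFconj : ∀ q, (starRingEnd ℂ) (F q) = F q := fun q => by simp [hFdef]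
  -- differentiability
  have hWd : ∀ q ∈ Ω, DifferentiableAt ℝ W q := fun q hq =>
    (hW.contDiffAt (hΩ.mem_nhds hq)).differentiableAt two_ne_zero
  have hFd : ∀ q ∈ Ω, DifferentiableAt ℝ F q := fun q hq =>
    (hFc.contDiffAt (hΩ.mem_nhds hq)).differentiableAt two_ne_zero
  have hpdWd : ∀ (v : P2), ∀ q ∈ Ω, DifferentiableAt ℝ (fun r => fderiv ℝ W r v) q :=
    fun v q hq => ((pd_contDiffOn hΩ hW v).contDiffAt (hΩ.mem_nhds hq)).differentiableAt one_ne_zero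
  have hpdFd : ∀ (v : P2), ∀ q ∈ Ω, DifferentiableAt ℝ (fun r => fderiv ℝ F r v) q :=
    fun v q hq => ((pd_contDiffOn hΩ hFc v).contDiffAt (hΩ.mem_nhds hq)).differentiableAt one_ne_zero
  -- dz / dzbar as explicit combinations
  have hdzWfun : dz W = fun q => (2:ℂ)⁻¹ * (fderiv ℝ W q e0 - Complex.I * fderiv ℝ W q e1) := by
    funext q; simp only [dz, pdx, pdy, ← he0, ← he1]; ring
  have hdzbarWfun : dzbar W = fun q => (2:ℂ)⁻¹ * (fderiv ℝ W q e0 + Complex.I * fderiv ℝ W q e1) := by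
    funext q; simp only [dzbar, pdx, pdy, ← he0, ← he1]; ring
  have hdzFfun : dz F = fun q => (2:ℂ)⁻¹ * (fderiv ℝ F q e0 - Complex.I * fderiv ℝ F q e1) := by
    funext q; simp only [dz, pdx, pdy, ← he0, ← he1]; ring
  have hdzbarFfun : dzbar F = fun q => (2:ℂ)⁻¹ * (fderiv ℝ F q e0 + Complex.I * fderiv ℝ F q e1) := by
    funext q; simp only [dzbar, pdx, pdy, ← he0, ← he1]; ring
  have hdzWd : ∀ q ∈ Ω, DifferentiableAt ℝ (dz W) q := by
    intro q hq; rw [hdzWfun]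
    exact ((hpdWd e0 q hq).sub ((hpdWd e1 q hq).const_mul Complex.I)).const_mul _
  have hdzbarWd : ∀ q ∈ Ω, DifferentiableAt ℝ (dzbar W) q := by
    intro q hq; rw [hdzbarWfun]
    exact ((hpdWd e0 q hq).add ((hpdWd e1 q hq).const_mul Complex.I)).const_mul _
  have hdzFd : ∀ q ∈ Ω, DifferentiableAt ℝ (dz F) q := by
    intro q hq; rw [hdzFfun]
    exact ((hpdFd e0 q hq).sub ((hpdFd e1 q hq).const_mul Complex.I)).const_mul _
  have hdzbarFd : ∀ q ∈ Ω, DifferentiableAt ℝ (dzbar F) q := by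
    intro q hq; rw [hdzbarFfun]
    exact ((hpdFd e0 q hq).add ((hpdFd e1 q hq).const_mul Complex.I)).const_mul _
  have hconjWd : ∀ q ∈ Ω, DifferentiableAt ℝ (fun r => (starRingEnd ℂ) (W r)) q := by
    intro q hq
    have h : (fun r => (starRingEnd ℂ) (W r)) = (Complex.conjCLE : ℂ ≃L[ℝ] ℂ) ∘ W := by
      funext r; simp [Complex.conjCLE_apply]
    rw [h]; exact Complex.conjCLE.differentiableAt.comp q (hWd q hq)
  have hQd : ∀ q ∈ Ω, DifferentiableAt ℝ (fun r => dz F r / F r) q := by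
    intro q hq
    have h1 := (hdzFd q hq).fun_mul ((hFd q hq).inv (hF0 q hq))
    simpa [div_eq_mul_inv] using h1
  -- values of fderiv of dz/dzbar at p
  have hfdzW : ∀ v, fderiv ℝ (dz W) p v =
      (2:ℂ)⁻¹ * (fderiv ℝ (fun r => fderiv ℝ W r e0) p v
        - Complex.I * fderiv ℝ (fun r => fderiv ℝ W r e1) p v) := by
    intro v
    rw [hdzWfun,
      fderiv_const_mul ((hpdWd e0 p hp).fun_sub ((hpdWd e1 p hp).const_mul Complex.I)) ((2:ℂ)⁻¹),
      fderiv_fun_sub (hpdWd e0 p hp) ((hpdWd e1 p hp).const_mul Complex.I),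
      fderiv_const_mul (hpdWd e1 p hp) Complex.I]
    simp only [ContinuousLinearMap.coe_smul', Pi.smul_apply, ContinuousLinearMap.coe_sub',
      Pi.sub_apply, smul_eq_mul]
  have hfdzbarW : ∀ v, fderiv ℝ (dzbar W) p v =
      (2:ℂ)⁻¹ * (fderiv ℝ (fun r => fderiv ℝ W r e0) p v
        + Complex.I * fderiv ℝ (fun r => fderiv ℝ W r e1) p v) := by
    intro v
    rw [hdzbarWfun,
      fderiv_const_mul ((hpdWd e0 p hp).fun_add ((hpdWd e1 p hp).const_mul Complex.I)) ((2:ℂ)⁻¹),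
      fderiv_fun_add (hpdWd e0 p hp) ((hpdWd e1 p hp).const_mul Complex.I),
      fderiv_const_mul (hpdWd e1 p hp) Complex.I]
    simp only [ContinuousLinearMap.coe_smul', Pi.smul_apply, ContinuousLinearMap.coe_add',
      Pi.add_apply, smul_eq_mul]
  have hfdzF : ∀ v, fderiv ℝ (dz F) p v =
      (2:ℂ)⁻¹ * (fderiv ℝ (fun r => fderiv ℝ F r e0) p v
        - Complex.I * fderiv ℝ (fun r => fderiv ℝ F r e1) p v) := by
    intro v
    rw [hdzFfun,
      fderiv_const_mul ((hpdFd e0 p hp).fun_sub ((hpdFd e1 p hp).const_mul Complex.I)) ((2:ℂ)⁻¹),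
      fderiv_fun_sub (hpdFd e0 p hp) ((hpdFd e1 p hp).const_mul Complex.I),
      fderiv_const_mul (hpdFd e1 p hp) Complex.I]
    simp only [ContinuousLinearMap.coe_smul', Pi.smul_apply, ContinuousLinearMap.coe_sub',
      Pi.sub_apply, smul_eq_mul]
  have hfdzbarF : ∀ v, fderiv ℝ (dzbar F) p v =
      (2:ℂ)⁻¹ * (fderiv ℝ (fun r => fderiv ℝ F r e0) p v
        + Complex.I * fderiv ℝ (fun r => fderiv ℝ F r e1) p v) := by
    intro v
    rw [hdzbarFfun,
      fderiv_const_mul ((hpdFd e0 p hp).fun_add ((hpdFd e1 p hp).const_mul Complex.I)) ((2:ℂ)⁻¹),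
      fderiv_fun_add (hpdFd e0 p hp) ((hpdFd e1 p hp).const_mul Complex.I),
      fderiv_const_mul (hpdFd e1 p hp) Complex.I]
    simp only [ContinuousLinearMap.coe_smul', Pi.smul_apply, ContinuousLinearMap.coe_add',
      Pi.add_apply, smul_eq_mul]
  -- pointwise Vekua equation, cleared of denominators
  have hVek' : ∀ q ∈ Ω, dzbar W q * F q = dzbar F q * (starRingEnd ℂ) (W q) := by
    intro q hq
    have h := hVek q hq
    simp only [Vop, sub_eq_zero] at h
    rw [h]; field_simp [hF0 q hq]
  -- derivative of the Vekua identity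
  have hDg : ∀ v, fderiv ℝ
      (fun q => dzbar W q * F q - dzbar F q * (starRingEnd ℂ) (W q)) p v = 0 := by
    intro v
    have hg0 : (fun q => dzbar W q * F q - dzbar F q * (starRingEnd ℂ) (W q))
        =ᶠ[nhds p] fun _ => (0:ℂ) := by
      filter_upwards [hmem] with q hq
      rw [hVek' q hq]; ring
    rw [hg0.fderiv_eq]; simp
  have hD : ∀ v, fderiv ℝ (dzbar W) p v * F p + dzbar W p * fderiv ℝ F p v
      = fderiv ℝ (dzbar F) p v * (starRingEnd ℂ) (W p)
        + dzbar F p * (starRingEnd ℂ) (fderiv ℝ W p v) := by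
    intro v
    have h1 := hDg v
    rw [fderiv_fun_sub ((hdzbarWd p hp).fun_mul (hFd p hp)) ((hdzbarFd p hp).fun_mul (hconjWd p hp))] at h1
    simp only [ContinuousLinearMap.coe_sub', Pi.sub_apply] at h1
    rw [fdv_mul (hdzbarWd p hp) (hFd p hp) v, fdv_mul (hdzbarFd p hp) (hconjWd p hp) v,
      fdv_conj W p v] at h1
    linear_combination h1
  -- derivative of the quotient Q = dz F / F
  have hQF : ∀ v, fderiv ℝ (fun r => dz F r / F r) p v * F p
      + (dz F p / F p) * fderiv ℝ F p v = fderiv ℝ (dz F) p v := by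
    intro v
    have hev : (fun q => dz F q / F q * F q) =ᶠ[nhds p] dz F := by
      filter_upwards [hmem] with q hq
      field_simp [hF0 q hq]
    have h3 := fdv_mul (hQd p hp) (hFd p hp) v
    rw [hev.fderiv_eq] at h3
    linear_combination -h3
  -- conjugation facts
  have hcF : ∀ v, (starRingEnd ℂ) (fderiv ℝ F p v) = fderiv ℝ F p v := by
    intro v
    have h := fdv_conj F p v
    rw [show (fun q => (starRingEnd ℂ) (F q)) = F from funext hFconj] at h
    exact h.symm
  -- symmetry of second derivatives
  have hsymW : fderiv ℝ (fun r => fderiv ℝ W r e0) p e1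
      = fderiv ℝ (fun r => fderiv ℝ W r e1) p e0 := pd_symm (hW.contDiffAt hmem) e0 e1
  have hsymF : fderiv ℝ (fun r => fderiv ℝ F r e0) p e1
      = fderiv ℝ (fun r => fderiv ℝ F r e1) p e0 := pd_symm (hFc.contDiffAt hmem) e0 e1
  -- pointwise values
  have hdzWp : dz W p = (2:ℂ)⁻¹ * (fderiv ℝ W p e0 - Complex.I * fderiv ℝ W p e1) := by
    rw [hdzWfun]
  have hdzbarWp : dzbar W p = (2:ℂ)⁻¹ * (fderiv ℝ W p e0 + Complex.I * fderiv ℝ W p e1) := by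
    rw [hdzbarWfun]
  have hdzFp : dz F p = (2:ℂ)⁻¹ * (fderiv ℝ F p e0 - Complex.I * fderiv ℝ F p e1) := by
    rw [hdzFfun]
  have hdzbarFp : dzbar F p = (2:ℂ)⁻¹ * (fderiv ℝ F p e0 + Complex.I * fderiv ℝ F p e1) := by
    rw [hdzbarFfun]
  -- expand the goal
  have hVb : Vbarop F W = fun q => dz W q - (dz F q / F q) * (starRingEnd ℂ) (W q) := rfl
  have hQmuld : DifferentiableAt ℝ (fun q => (dz F q / F q) * (starRingEnd ℂ) (W q)) p :=
    (hQd p hp).mul (hconjWd p hp)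
  have hfdVb : ∀ v, fderiv ℝ (Vbarop F W) p v
      = fderiv ℝ (dz W) p v - (fderiv ℝ (fun r => dz F r / F r) p v * (starRingEnd ℂ) (W p)
        + (dz F p / F p) * (starRingEnd ℂ) (fderiv ℝ W p v)) := by
    intro v
    rw [hVb, fderiv_fun_sub (hdzWd p hp) hQmuld]
    simp only [ContinuousLinearMap.coe_sub', Pi.sub_apply]
    rw [fdv_mul (hQd p hp) (hconjWd p hp) v, fdv_conj W p v]
  have hgoal : V1op F (Vbarop F W) p
      = (2:ℂ)⁻¹ * (fderiv ℝ (Vbarop F W) p e0 + Complex.I * fderiv ℝ (Vbarop F W) p e1)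
        + (dz F p / F p) * (starRingEnd ℂ) (Vbarop F W p) := by
    simp only [V1op, dzbar, pdx, pdy, ← he0, ← he1]
    ring
  have hcVb : (starRingEnd ℂ) (Vbarop F W p)
      = (starRingEnd ℂ) (dz W p) - (starRingEnd ℂ) (dz F p / F p) * W p := by
    rw [hVb]
    simp [map_sub, map_mul]
  have hcdzW : (starRingEnd ℂ) (dz W p)
      = (2:ℂ)⁻¹ * ((starRingEnd ℂ) (fderiv ℝ W p e0)
        + Complex.I * (starRingEnd ℂ) (fderiv ℝ W p e1)) := by
    rw [hdzWp]
    simp only [map_mul, map_sub, map_inv₀, map_ofNat, Complex.conj_I]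
    ring
  -- Vekua at p in coordinates, and its conjugate
  have hVp := hVek' p hp
  rw [hdzbarWp, hdzbarFp] at hVp
  have hVc : (2:ℂ)⁻¹ * ((starRingEnd ℂ) (fderiv ℝ W p e0)
        - Complex.I * (starRingEnd ℂ) (fderiv ℝ W p e1)) * F p
      = (2:ℂ)⁻¹ * (fderiv ℝ F p e0 - Complex.I * fderiv ℝ F p e1) * W p := by
    have hh := congrArg (starRingEnd ℂ) hVp
    simp only [map_mul, map_add, map_sub, map_inv₀, map_ofNat, Complex.conj_I,
      Complex.conj_conj, hFconj p, hcF e0, hcF e1] at hh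
    linear_combination hh
  -- the quotient value and its conjugate
  set Qp : ℂ := dz F p / F p with hQpdef
  have hQprel : Qp * F p = (2:ℂ)⁻¹ * (fderiv ℝ F p e0 - Complex.I * fderiv ℝ F p e1) := by
    rw [hQpdef, div_mul_cancel₀ _ hFp0]
    exact hdzFp
  have hcQprel : (starRingEnd ℂ) Qp * F p
      = (2:ℂ)⁻¹ * (fderiv ℝ F p e0 + Complex.I * fderiv ℝ F p e1) := by
    have hh := congrArg (starRingEnd ℂ) hQprel
    simp only [map_mul, map_sub, map_inv₀, map_ofNat, Complex.conj_I,
      hFconj p, hcF e0, hcF e1] at hh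
    linear_combination hh
  -- derivative identities in coordinates
  have hD0 := hD e0
  rw [hfdzbarW e0, hfdzbarF e0, hdzbarWp, hdzbarFp] at hD0
  have hD1 := hD e1
  rw [hfdzbarW e1, hfdzbarF e1, hdzbarWp, hdzbarFp] at hD1
  have hQF0 := hQF e0
  rw [hfdzF e0] at hQF0
  have hQF1 := hQF e1
  rw [hfdzF e1] at hQF1
  -- finish
  rw [hgoal, hfdVb e0, hfdVb e1, hcVb, hcdzW, hfdzW e0, hfdzW e1]
  have hne : (F p)^2 ≠ 0 := pow_ne_zero 2 hFp0
  apply mul_left_cancel₀ hne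
  rw [mul_zero]
  linear_combination (F p/2) * hD0 - (Complex.I * F p/2) * hD1
    - ((starRingEnd ℂ) (W p) * F p/2) * hQF0
    - (Complex.I * (starRingEnd ℂ) (W p) * F p/2) * hQF1
    + (((starRingEnd ℂ) (W p) - W p) * (fderiv ℝ F p e0 + Complex.I * fderiv ℝ F p e1)/2) * hQprel
    - (W p * Qp * F p) * hcQprel
    - ((fderiv ℝ F p e0 - Complex.I * fderiv ℝ F p e1)/2) * hVp
    + ((fderiv ℝ F p e0 + Complex.I * fderiv ℝ F p e1)/2) * hVc
    + (Complex.I * (F p)^2/2) * hsymW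
    - (Complex.I * (starRingEnd ℂ) (W p) * F p/2) * hsymF
end
end

section
/- Let f : Ω → ℂ be a nonvanishing scalar C² function on an open set Ω ⊆ ℝ³ and set q = Δf/f. Then for every scalar (complex-valued) C² function φ on Ω one has (D + M^{Df/f})((D − (Df/f)C_H)φ) = (−Δ + q)φ, i.e. D(Dφ − (Df/f)φ) + (Dφ − (Df/f)φ)·(Df/f) = −Δφ + qφ. -/
open Quaternion

noncomputable section

/-- Points of ℝ³. -/
abbrev P3 := EuclideanSpace ℝ (Fin 3)

/-- Partial derivative ∂ₖ of a complex-valued function on ℝ³. -/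
def pd (k : Fin 3) (F : P3 → ℂ) : P3 → ℂ :=
  fun p => fderiv ℝ F p (EuclideanSpace.single k 1)

/-- The Laplacian Δ = ∂₁² + ∂₂² + ∂₃². -/
def lap3 (F : P3 → ℂ) : P3 → ℂ := fun p => ∑ k : Fin 3, pd k (pd k F) p

/-- Embedding of a complex scalar as a quaternion. -/
def qC (z : ℂ) : ℍ[ℂ] := ⟨z, 0, 0, 0⟩

/-- The quaternionic imaginary units e₁, e₂, e₃. -/
def qe : Fin 3 → ℍ[ℂ] := ![⟨0,1,0,0⟩, ⟨0,0,1,0⟩, ⟨0,0,0,1⟩]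

/-- The eₖ-components of a quaternion. -/
def qcomp : Fin 3 → ℍ[ℂ] → ℂ := ![QuaternionAlgebra.imI, QuaternionAlgebra.imJ, QuaternionAlgebra.imK]

/-- Quaternionic conjugation C_H. -/
def CH (q : ℍ[ℂ]) : ℍ[ℂ] := ⟨q.re, -q.imI, -q.imJ, -q.imK⟩

/-- Componentwise partial derivative of a quaternion-valued function. -/
def pdq (k : Fin 3) (W : P3 → ℍ[ℂ]) : P3 → ℍ[ℂ] :=
  fun p => ⟨pd k (fun x => (W x).re) p, pd k (fun x => (W x).imI) p,
            pd k (fun x => (W x).imJ) p, pd k (fun x => (W x).imK) p⟩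

/-- The Dirac (Moisil–Theodorescu) operator D Q = Σₖ eₖ ∂ₖ Q. -/
def Dq (W : P3 → ℍ[ℂ]) : P3 → ℍ[ℂ] := fun p => ∑ k : Fin 3, qe k * pdq k W p

/-- The right Dirac operator Dᵣ Q = Σₖ (∂ₖ Q) eₖ. -/
def Drq (W : P3 → ℍ[ℂ]) : P3 → ℍ[ℂ] := fun p => ∑ k : Fin 3, pdq k W p * qe k

/-- Gradient of a scalar function viewed as a purely vectorial quaternion. -/
def gradq (F : P3 → ℂ) : P3 → ℍ[ℂ] := fun p => ⟨0, pd 0 F p, pd 1 F p, pd 2 F p⟩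

/-- Divergence of (the vector part of) a quaternion-valued function. -/
def divq (W : P3 → ℍ[ℂ]) : P3 → ℂ :=
  fun p => pd 0 (fun x => (W x).imI) p + pd 1 (fun x => (W x).imJ) p + pd 2 (fun x => (W x).imK) p

/-- Rotor (curl) of (the vector part of) a quaternion-valued function. -/
def rotq (W : P3 → ℍ[ℂ]) : P3 → ℍ[ℂ] :=
  fun p => ⟨0,
    pd 1 (fun x => (W x).imK) p - pd 2 (fun x => (W x).imJ) p,
    pd 2 (fun x => (W x).imI) p - pd 0 (fun x => (W x).imK) p,
    pd 0 (fun x => (W x).imJ) p - pd 1 (fun x => (W x).imI) p⟩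

/-- Cross product of the vector parts of two quaternions. -/
def crossq (u v : ℍ[ℂ]) : ℍ[ℂ] :=
  ⟨0, u.imJ * v.imK - u.imK * v.imJ, u.imK * v.imI - u.imI * v.imK, u.imI * v.imJ - u.imJ * v.imI⟩

/-- Bilinear scalar product of the vector parts of two quaternions. -/
def dotq (u v : ℍ[ℂ]) : ℂ := u.imI * v.imI + u.imJ * v.imJ + u.imK * v.imK

/-- `Cⁿ` smoothness of a quaternion-valued function on a set, componentwise. -/
def QContDiffOn (n : ℕ) (W : P3 → ℍ[ℂ]) (Ω : Set P3) : Prop :=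
  ContDiffOn ℝ n (fun p => (W p).re) Ω ∧ ContDiffOn ℝ n (fun p => (W p).imI) Ω ∧
  ContDiffOn ℝ n (fun p => (W p).imJ) Ω ∧ ContDiffOn ℝ n (fun p => (W p).imK) Ω

/-- The pure-quaternion Df/f built from a nonvanishing scalar function f. -/
def DfF (f : P3 → ℂ) : P3 → ℍ[ℂ] := fun p => (f p)⁻¹ • gradq f p


section AuxLemmas

@[simp] lemma qmk_re (a b c d : ℂ) : (⟨a, b, c, d⟩ : ℍ[ℂ]).re = a := rfl
@[simp] lemma qmk_imI (a b c d : ℂ) : (⟨a, b, c, d⟩ : ℍ[ℂ]).imI = b := rfl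
@[simp] lemma qmk_imJ (a b c d : ℂ) : (⟨a, b, c, d⟩ : ℍ[ℂ]).imJ = c := rfl
@[simp] lemma qmk_imK (a b c d : ℂ) : (⟨a, b, c, d⟩ : ℍ[ℂ]).imK = d := rfl

lemma pd_sub' {a b : P3 → ℂ} {p : P3} (ha : DifferentiableAt ℝ a p)
    (hb : DifferentiableAt ℝ b p) (k : Fin 3) :
    pd k (fun x => a x - b x) p = pd k a p - pd k b p := by
  unfold pd
  rw [fderiv_fun_sub ha hb]
  simp

lemma pd_mul' {a b : P3 → ℂ} {p : P3} (ha : DifferentiableAt ℝ a p)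
    (hb : DifferentiableAt ℝ b p) (k : Fin 3) :
    pd k (fun x => a x * b x) p = pd k a p * b p + a p * pd k b p := by
  unfold pd
  rw [fderiv_fun_mul ha hb]
  simp [smul_eq_mul]
  ring

lemma pd_inv' {a : P3 → ℂ} {p : P3} (ha : DifferentiableAt ℝ a p) (h0 : a p ≠ 0) (k : Fin 3) :
    pd k (fun x => (a x)⁻¹) p = -((a p)⁻¹ * (a p)⁻¹) * pd k a p := by
  have h : HasFDerivAt (fun x => (a x)⁻¹)
      ((-ContinuousLinearMap.mulLeftRight ℝ ℂ (a p)⁻¹ (a p)⁻¹).comp (fderiv ℝ a p)) p :=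
    (hasFDerivAt_inv' (𝕜 := ℝ) h0).comp p ha.hasFDerivAt
  unfold pd
  rw [h.fderiv]
  simp [ContinuousLinearMap.mulLeftRight_apply]
  ring

lemma pd_pd_eq {F : P3 → ℂ} {p : P3} (hF : DifferentiableAt ℝ (fderiv ℝ F) p) (j k : Fin 3) :
    pd k (pd j F) p
      = fderiv ℝ (fderiv ℝ F) p (EuclideanSpace.single k 1) (EuclideanSpace.single j 1) := by
  have h2 := (ContinuousLinearMap.apply ℝ ℂ (EuclideanSpace.single j (1:ℝ))).hasFDerivAt.comp p
    hF.hasFDerivAt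
  have h2 : HasFDerivAt (fun x => fderiv ℝ F x (EuclideanSpace.single j (1:ℝ)))
      ((ContinuousLinearMap.apply ℝ ℂ (EuclideanSpace.single j (1:ℝ))).comp
        (fderiv ℝ (fderiv ℝ F) p)) p := h2
  unfold pd
  rw [h2.fderiv]
  rfl

lemma pd_diff {F : P3 → ℂ} {p : P3} (hF : ContDiffAt ℝ 2 F p) (j : Fin 3) :
    DifferentiableAt ℝ (pd j F) p := by
  have h1 : DifferentiableAt ℝ (fderiv ℝ F) p :=
    (hF.fderiv_right (m := 1) (by norm_num)).differentiableAt one_ne_zero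
  have h2 := (ContinuousLinearMap.apply ℝ ℂ (EuclideanSpace.single j (1:ℝ))).hasFDerivAt.comp p
    h1.hasFDerivAt
  have h3 : DifferentiableAt ℝ (fun x => fderiv ℝ F x (EuclideanSpace.single j (1:ℝ))) p :=
    h2.differentiableAt
  exact h3

lemma pd_symm_s5 {F : P3 → ℂ} {p : P3} (hF : ContDiffAt ℝ 2 F p) (j k : Fin 3) :
    pd k (pd j F) p = pd j (pd k F) p := by
  have h1 : DifferentiableAt ℝ (fderiv ℝ F) p :=
    (hF.fderiv_right (m := 1) (by norm_num)).differentiableAt one_ne_zero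
  rw [pd_pd_eq h1, pd_pd_eq h1]
  exact (hF.isSymmSndFDerivAt (by simp)).eq _ _

end AuxLemmas

/-- spatial factorization of the Schrödinger operator on scalars:
    (D + Mᴰᶠ/ᶠ)((D − (Df/f)C_H)φ) = (−Δ + q)φ with q = Δf/f. -/
theorem statement5 (Ω : Set P3) (hΩ : IsOpen Ω)
    (f : P3 → ℂ) (hf : ContDiffOn ℝ 2 f Ω) (hf0 : ∀ p ∈ Ω, f p ≠ 0)
    (φ : P3 → ℂ) (hφ : ContDiffOn ℝ 2 φ Ω) :
    ∀ p ∈ Ω,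
      Dq (fun x => gradq φ x - φ x • DfF f x) p
          + (gradq φ p - φ p • DfF f p) * DfF f p
        = qC (-(lap3 φ p) + (lap3 f p / f p) * φ p) := by
  intro p hp
  have hmem : Ω ∈ nhds p := hΩ.mem_nhds hp
  have hfA : ContDiffAt ℝ 2 f p := (hf p hp).contDiffAt hmem
  have hφA : ContDiffAt ℝ 2 φ p := (hφ p hp).contDiffAt hmem
  have hfd : DifferentiableAt ℝ f p := hfA.differentiableAt two_ne_zero
  have hφd : DifferentiableAt ℝ φ p := hφA.differentiableAt two_ne_zero
  have h0 : f p ≠ 0 := hf0 p hp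
  have hpdf : ∀ j : Fin 3, DifferentiableAt ℝ (pd j f) p := pd_diff hfA
  have hpdφ : ∀ j : Fin 3, DifferentiableAt ℝ (pd j φ) p := pd_diff hφA
  have hsf := pd_symm_s5 hfA
  have hsφ := pd_symm_s5 hφA
  have d1 : DifferentiableAt ℝ (fun x => (f x)⁻¹) p := hfd.inv h0
  have d2 : ∀ j : Fin 3, DifferentiableAt ℝ (fun x => (f x)⁻¹ * pd j f x) p :=
    fun j => d1.mul (hpdf j)
  have d3 : ∀ j : Fin 3, DifferentiableAt ℝ (fun x => φ x * ((f x)⁻¹ * pd j f x)) p :=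
    fun j => hφd.mul (d2 j)
  have key : ∀ j k : Fin 3,
      pd k (fun x => pd j φ x - φ x * ((f x)⁻¹ * pd j f x)) p
        = pd k (pd j φ) p - (pd k φ p * ((f p)⁻¹ * pd j f p)
            + φ p * (-((f p)⁻¹ * (f p)⁻¹) * pd k f p * pd j f p
              + (f p)⁻¹ * pd k (pd j f) p)) := by
    intro j k
    rw [pd_sub' (hpdφ j) (d3 j) k, pd_mul' hφd (d2 j) k, pd_mul' d1 (hpdf j) k,
      pd_inv' hfd h0 k]
  have hc0 : (fun x => (gradq φ x - φ x • DfF f x).re) = fun _ => (0:ℂ) := by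
    funext x
    show (0:ℂ) - φ x * ((f x)⁻¹ * 0) = 0; simp
  have hpc0 : ∀ k : Fin 3, pd k (fun x => (gradq φ x - φ x • DfF f x).re) p = 0 := by
    intro k
    rw [hc0]
    simp [pd]
  have hcI : (fun x => (gradq φ x - φ x • DfF f x).imI)
      = fun x => pd 0 φ x - φ x * ((f x)⁻¹ * pd 0 f x) := by
    funext x; rfl
  have hcJ : (fun x => (gradq φ x - φ x • DfF f x).imJ)
      = fun x => pd 1 φ x - φ x * ((f x)⁻¹ * pd 1 f x) := by
    funext x; rfl
  have hcK : (fun x => (gradq φ x - φ x • DfF f x).imK)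
      = fun x => pd 2 φ x - φ x * ((f x)⁻¹ * pd 2 f x) := by
    funext x; rfl
  apply Quaternion.ext <;>
    simp only [Dq, Fin.sum_univ_three, lap3, Quaternion.re_add, Quaternion.imI_add, Quaternion.imJ_add,
      Quaternion.imK_add, Quaternion.re_mul, Quaternion.imI_mul, Quaternion.imJ_mul,
      Quaternion.imK_mul, Quaternion.re_sub, Quaternion.imI_sub, Quaternion.imJ_sub,
      Quaternion.imK_sub, Quaternion.re_smul, Quaternion.imI_smul, Quaternion.imJ_smul,
      Quaternion.imK_smul] <;>
    simp only [pdq, hcI, hcJ, hcK, hpc0, key] <;>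
    simp only [DfF, Quaternion.re_add, Quaternion.imI_add, Quaternion.imJ_add,
      Quaternion.imK_add, Quaternion.re_mul, Quaternion.imI_mul, Quaternion.imJ_mul,
      Quaternion.imK_mul, Quaternion.re_sub, Quaternion.imI_sub, Quaternion.imJ_sub,
      Quaternion.imK_sub, Quaternion.re_smul, Quaternion.imI_smul, Quaternion.imJ_smul,
      Quaternion.imK_smul, Quaternion.re_neg, Quaternion.imI_neg, Quaternion.imJ_neg,
      Quaternion.imK_neg] <;>
    simp only [Dq, pdq, Fin.sum_univ_three, qe, Matrix.cons_val_zero, Matrix.cons_val_one,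
      Matrix.head_cons, Matrix.cons_val_two, Matrix.tail_cons, hcI, hcJ, hcK, hpc0, key,
      lap3, qC, DfF, gradq, qC, Quaternion.re_add, Quaternion.imI_add, Quaternion.imJ_add,
      Quaternion.imK_add, Quaternion.re_mul, Quaternion.imI_mul, Quaternion.imJ_mul,
      Quaternion.imK_mul, Quaternion.re_sub, Quaternion.imI_sub, Quaternion.imJ_sub,
      Quaternion.imK_sub, Quaternion.re_smul, Quaternion.imI_smul, Quaternion.imJ_smul,
      Quaternion.imK_smul, qmk_re, qmk_imI, qmk_imJ, qmk_imK, smul_eq_mul,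
      hsf 0 1, hsf 0 2, hsf 1 2, hsφ 0 1, hsφ 0 2, hsφ 1 2, div_eq_mul_inv]
  all_goals try (ring_nf; simp [pd])
  all_goals ring
end
end

section
/- Let f : Ω → ℂ be a nonvanishing scalar C¹ function on an open set Ω ⊆ ℝ³. If W : Ω → ℍ(ℂ) is a C¹ solution of the main Vekua equation VW = 0, then its derivative Ẇ = V̄W is purely vectorial, i.e. Sc(V̄W) = 0 on Ω. -/
open Quaternion

noncomputable section

/-- the derivative Ẇ = V̄W of a solution of VW = 0 is purely
    vectorial: Sc(V̄W) = 0. -/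
theorem statement10 (Ω : Set P3) (hΩ : IsOpen Ω)
    (f : P3 → ℂ) (hf : ContDiffOn ℝ 1 f Ω) (hf0 : ∀ p ∈ Ω, f p ≠ 0)
    (W : P3 → ℍ[ℂ]) (hW : QContDiffOn 1 W Ω)
    (hVek : ∀ p ∈ Ω, Dq W p - DfF f p * CH (W p) = 0) :
    ∀ p ∈ Ω, (Drq W p - CH (W p) * DfF f p).re = 0 := by
  intro p hp
  have h := congrArg QuaternionAlgebra.re (hVek p hp)
  obtain ⟨a0, b0, c0, d0⟩ : (qe 0).re = 0 ∧ (qe 0).imI = 1 ∧ (qe 0).imJ = 0 ∧ (qe 0).imK = 0 :=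
    ⟨rfl, rfl, rfl, rfl⟩
  obtain ⟨a1, b1, c1, d1⟩ : (qe 1).re = 0 ∧ (qe 1).imI = 0 ∧ (qe 1).imJ = 1 ∧ (qe 1).imK = 0 :=
    ⟨rfl, rfl, rfl, rfl⟩
  obtain ⟨a2, b2, c2, d2⟩ : (qe 2).re = 0 ∧ (qe 2).imI = 0 ∧ (qe 2).imJ = 0 ∧ (qe 2).imK = 1 :=
    ⟨rfl, rfl, rfl, rfl⟩
  simp only [Dq, Drq, Fin.sum_univ_three, Quaternion.re_sub,
    Quaternion.re_add, Quaternion.re_mul, Quaternion.re_zero, DfF,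
    Quaternion.re_smul, Quaternion.imI_smul, Quaternion.imJ_smul, Quaternion.imK_smul,
    a0, b0, c0, d0, a1, b1, c1, d1, a2, b2, c2, d2] at h ⊢
  dsimp only [CH, gradq] at h ⊢
  ring_nf at h ⊢
  linear_combination h
end
end

section
/- Let f : Ω → ℂ be a nonvanishing scalar C¹ function on an open set Ω ⊆ ℝ³. If W = W₀ + 𝐖 : Ω → ℍ(ℂ) is a C¹ solution of the main Vekua equation VW = 0, then the derivative Ẇ = V̄W satisfies V̄W = 2f·Σ_{k=1}^{3} ∂_k(W₀/f) e_k, i.e. f·Ẇ = 2f²·∇(W₀/f) as a purely vectorial quaternion-valued function. -/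
open Quaternion

noncomputable section

/-- Partial derivative of a quotient of complex-valued functions on ℝ³. -/
lemma pd_div (g h : P3 → ℂ) (p : P3) (hg : DifferentiableAt ℝ g p)
    (hh : DifferentiableAt ℝ h p) (h0 : h p ≠ 0) (k : Fin 3) :
    pd k (fun x => g x / h x) p = (pd k g p * h p - g p * pd k h p) / (h p)^2 := by
  have hA : HasFDerivAt (fun y : ℂ => y⁻¹)
      ((ContinuousLinearMap.smulRight (1 : ℂ →L[ℂ] ℂ) (-(h p ^ 2)⁻¹)).restrictScalars ℝ) (h p) :=
    ((hasDerivAt_inv h0).hasFDerivAt).restrictScalars ℝ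
  have hinv := hA.comp p hh.hasFDerivAt
  have hmul := hg.hasFDerivAt.mul hinv
  have hmul' : HasFDerivAt (fun x => g x / h x)
      (g p • (ContinuousLinearMap.restrictScalars ℝ (ContinuousLinearMap.smulRight
        (1 : ℂ →L[ℂ] ℂ) (-(h p ^ 2)⁻¹))).comp (fderiv ℝ h p) +
        (h p)⁻¹ • fderiv ℝ g p) p := by
    simpa [div_eq_mul_inv, Function.comp_def, Pi.mul_def] using hmul
  unfold pd
  rw [hmul'.fderiv]
  simp only [ContinuousLinearMap.add_apply, ContinuousLinearMap.smul_apply,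
    ContinuousLinearMap.coe_comp', Function.comp_apply,
    ContinuousLinearMap.coe_restrictScalars', ContinuousLinearMap.smulRight_apply,
    ContinuousLinearMap.one_apply, smul_eq_mul]
  field_simp
  ring

lemma qmk_mul (a b c d a' b' c' d' : ℂ) :
    HMul.hMul (α := ℍ[ℂ]) (β := ℍ[ℂ]) (γ := ℍ[ℂ]) ⟨a, b, c, d⟩ ⟨a', b', c', d'⟩ =
      ⟨a * a' - b * b' - c * c' - d * d', a * b' + b * a' + c * d' - d * c',
        a * c' - b * d' + c * a' + d * b', a * d' + b * c' - c * b' + d * a'⟩ := by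
  apply Quaternion.ext
  · exact Quaternion.re_mul _ _
  · exact Quaternion.imI_mul _ _
  · exact Quaternion.imJ_mul _ _
  · exact Quaternion.imK_mul _ _

lemma qmk_smul (x a b c d : ℂ) :
    HSMul.hSMul (α := ℂ) (β := ℍ[ℂ]) (γ := ℍ[ℂ]) x ⟨a, b, c, d⟩ = ⟨x * a, x * b, x * c, x * d⟩ :=
  rfl

lemma qmk_add (a b c d a' b' c' d' : ℂ) :
    HAdd.hAdd (α := ℍ[ℂ]) (β := ℍ[ℂ]) (γ := ℍ[ℂ]) ⟨a, b, c, d⟩ ⟨a', b', c', d'⟩ =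
      ⟨a + a', b + b', c + c', d + d'⟩ :=
  rfl

lemma qmk_sub (a b c d a' b' c' d' : ℂ) :
    HSub.hSub (α := ℍ[ℂ]) (β := ℍ[ℂ]) (γ := ℍ[ℂ]) ⟨a, b, c, d⟩ ⟨a', b', c', d'⟩ =
      ⟨a - a', b - b', c - c', d - d'⟩ :=
  rfl

/-- for a solution W = W₀ + 𝐖 of VW = 0, the derivative satisfies
    V̄W = 2f∇(W₀/f), i.e. f·Ẇ = 2f²·∇(W₀/f). -/
theorem statement11 (Ω : Set P3) (hΩ : IsOpen Ω)
    (f : P3 → ℂ) (hf : ContDiffOn ℝ 1 f Ω) (hf0 : ∀ p ∈ Ω, f p ≠ 0)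
    (W : P3 → ℍ[ℂ]) (hW : QContDiffOn 1 W Ω)
    (hVek : ∀ p ∈ Ω, Dq W p - DfF f p * CH (W p) = 0) :
    ∀ p ∈ Ω,
      (Drq W p - CH (W p) * DfF f p
        = (2 * f p) • gradq (fun x => (W x).re / f x) p) ∧
      (f p • (Drq W p - CH (W p) * DfF f p)
        = (2 * (f p) ^ 2) • gradq (fun x => (W x).re / f x) p) := by
  intro p hp
  have hop := hΩ.mem_nhds hp
  have hF : f p ≠ 0 := hf0 p hp
  have hfd : DifferentiableAt ℝ f p :=
    ((hf.differentiableOn (by norm_num)) p hp).differentiableAt hop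
  have hW0 : DifferentiableAt ℝ (fun x => (W x).re) p :=
    ((hW.1.differentiableOn (by norm_num)) p hp).differentiableAt hop
  have hq : ∀ k : Fin 3, pd k (fun x => (W x).re / f x) p
      = (pd k (fun x => (W x).re) p * f p - (W p).re * pd k f p) / (f p)^2 :=
    fun k => pd_div _ _ p hW0 hfd hF k
  have hv := hVek p hp
  rw [sub_eq_zero] at hv
  have hv' : f p • Dq W p = gradq f p * CH (W p) := by
    rw [hv]
    apply Quaternion.ext <;>
      simp only [DfF, gradq, CH, ↓Quaternion.re_mul, ↓Quaternion.imI_mul, ↓Quaternion.imJ_mul,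
        ↓Quaternion.imK_mul, ↓Quaternion.re_smul, ↓Quaternion.imI_smul, ↓Quaternion.imJ_smul,
        ↓Quaternion.imK_smul, qmk_mul, qmk_smul, qmk_add, qmk_sub, smul_eq_mul] <;>
      field_simp <;> ring
  have hv0 := congrArg QuaternionAlgebra.re hv'
  have hv1 := congrArg QuaternionAlgebra.imI hv'
  have hv2 := congrArg QuaternionAlgebra.imJ hv'
  have hv3 := congrArg QuaternionAlgebra.imK hv'
  simp only [Dq, pdq, qe, DfF, gradq, CH, Fin.sum_univ_three, Matrix.cons_val_zero,
    Matrix.cons_val_one, Matrix.head_cons, Matrix.cons_val_two, Matrix.tail_cons, Matrix.cons_val,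
    ↓Quaternion.re_mul, ↓Quaternion.imI_mul, ↓Quaternion.imJ_mul, ↓Quaternion.imK_mul,
    ↓Quaternion.re_add, ↓Quaternion.imI_add, ↓Quaternion.imJ_add, ↓Quaternion.imK_add,
    ↓Quaternion.re_smul, ↓Quaternion.imI_smul, ↓Quaternion.imJ_smul, ↓Quaternion.imK_smul, qmk_mul, qmk_smul, qmk_add, qmk_sub,
    smul_eq_mul, zero_mul, one_mul, mul_zero, mul_one, mul_neg, neg_neg, zero_add, add_zero,
    zero_sub, sub_zero, neg_zero] at hv0 hv1 hv2 hv3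
  have key : Drq W p - CH (W p) * DfF f p
      = (2 * f p) • gradq (fun x => (W x).re / f x) p := by
    apply Quaternion.ext <;>
      refine mul_left_cancel₀ hF ?_ <;>
      simp only [Drq, pdq, qe, DfF, gradq, CH, Fin.sum_univ_three, Matrix.cons_val_zero,
        Matrix.cons_val_one, Matrix.head_cons, Matrix.cons_val_two, Matrix.tail_cons, Matrix.cons_val,
        ↓Quaternion.re_mul, ↓Quaternion.imI_mul, ↓Quaternion.imJ_mul, ↓Quaternion.imK_mul,
        ↓Quaternion.re_add, ↓Quaternion.imI_add, ↓Quaternion.imJ_add, ↓Quaternion.imK_add,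
        ↓Quaternion.re_sub, ↓Quaternion.imI_sub, ↓Quaternion.imJ_sub, ↓Quaternion.imK_sub,
        ↓Quaternion.re_smul, ↓Quaternion.imI_smul, ↓Quaternion.imJ_smul, ↓Quaternion.imK_smul, qmk_mul, qmk_smul, qmk_add, qmk_sub,
        smul_eq_mul, hq 0, hq 1, hq 2, zero_mul, one_mul, mul_zero, mul_one, mul_neg, neg_neg,
        zero_add, add_zero, zero_sub, sub_zero, neg_zero] <;>
      field_simp
    · linear_combination hv0
    · linear_combination (-1 : ℂ) * hv1
    · linear_combination (-1 : ℂ) * hv2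
    · linear_combination (-1 : ℂ) * hv3
  refine ⟨key, ?_⟩
  rw [key, smul_smul]
  congr 1
  ring
end
end

section
/- Let f : Ω → ℂ be a nonvanishing scalar C¹ function on an open set Ω ⊆ ℝ³, and let ρ : Ω → ℝ be a harmonic function (Δρ = 0) such that ∇f × ∇ρ = 0 in Ω. Then the purely vectorial function F = (1/f)·Dρ satisfies DF + F·(Df/f) = 0, and G = f·Dρ satisfies DG − G·(Df/f) = 0. -/
open Quaternion

noncomputable section

section Aux

theorem pd_mul_aux (g h : P3 → ℂ) (p : P3) (hg : DifferentiableAt ℝ g p)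
    (hh : DifferentiableAt ℝ h p) (k : Fin 3) :
    pd k (fun x => g x * h x) p = g p * pd k h p + pd k g p * h p := by
  unfold pd
  rw [fderiv_fun_mul hg hh]
  simp [smul_eq_mul]
  ring

theorem pd_inv_aux (f : P3 → ℂ) (p : P3) (hf : DifferentiableAt ℝ f p) (h0 : f p ≠ 0)
    (k : Fin 3) :
    pd k (fun x => (f x)⁻¹) p = -((f p)⁻¹ * (f p)⁻¹) * pd k f p := by
  have hinv : DifferentiableAt ℝ (fun x => (f x)⁻¹) p := hf.inv h0
  have hev : (fun x => f x * (f x)⁻¹) =ᶠ[nhds p] fun _ => (1:ℂ) := by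
    filter_upwards [hf.continuousAt.eventually_ne h0] with x hx
    exact mul_inv_cancel₀ hx
  have h1 : fderiv ℝ (fun x => f x * (f x)⁻¹) p = 0 := by
    rw [hev.fderiv_eq]; exact fderiv_const_apply 1
  rw [fderiv_fun_mul hf hinv] at h1
  have h2 := congrArg (fun L => L (EuclideanSpace.single k (1:ℝ))) h1
  simp only [ContinuousLinearMap.add_apply, ContinuousLinearMap.smul_apply, smul_eq_mul,
    ContinuousLinearMap.zero_apply] at h2
  have hfi : (f p)⁻¹ * f p = 1 := inv_mul_cancel₀ h0
  unfold pd
  linear_combination (f p)⁻¹ * h2 -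
    ((fderiv ℝ (fun x => (f x)⁻¹) p) (EuclideanSpace.single k 1)) * hfi

theorem quat_comm_aux (u v : ℍ[ℂ]) (h : crossq u v = 0) : u * v = v * u := by
  have h1 := congrArg QuaternionAlgebra.imI h
  have h2 := congrArg QuaternionAlgebra.imJ h
  have h3 := congrArg QuaternionAlgebra.imK h
  simp only [crossq] at h1 h2 h3
  simp at h1 h2 h3
  apply Quaternion.ext
  · simp only [Quaternion.re_mul]; ring
  · simp only [Quaternion.imI_mul]; linear_combination 2*h1
  · simp only [Quaternion.imJ_mul]; linear_combination 2*h2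
  · simp only [Quaternion.imK_mul]; linear_combination 2*h3

theorem final1_aux (i : ℂ) (u v : ℍ[ℂ]) (h : crossq u v = 0) :
    ((-(i * i)) • u) * v + (i • v) * (i • u) = 0 := by
  have h1 := congrArg QuaternionAlgebra.imI h
  have h2 := congrArg QuaternionAlgebra.imJ h
  have h3 := congrArg QuaternionAlgebra.imK h
  simp only [crossq] at h1 h2 h3
  simp at h1 h2 h3
  apply Quaternion.ext <;>
    simp only [Quaternion.re_add, Quaternion.imI_add, Quaternion.imJ_add, Quaternion.imK_add,
      Quaternion.re_mul, Quaternion.imI_mul, Quaternion.imJ_mul, Quaternion.imK_mul,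
      Quaternion.re_smul, Quaternion.imI_smul, Quaternion.imJ_smul, Quaternion.imK_smul,
      Quaternion.re_zero, Quaternion.imI_zero, Quaternion.imJ_zero, Quaternion.imK_zero,
      smul_eq_mul]
  · ring
  · linear_combination (-2*i*i) * h1
  · linear_combination (-2*i*i) * h2
  · linear_combination (-2*i*i) * h3

theorem final2_aux (c i : ℂ) (hci : c * i = 1) (u v : ℍ[ℂ]) (h : crossq u v = 0) :
    u * v - (c • v) * (i • u) = 0 := by
  have h1 := congrArg QuaternionAlgebra.imI h
  have h2 := congrArg QuaternionAlgebra.imJ h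
  have h3 := congrArg QuaternionAlgebra.imK h
  simp only [crossq] at h1 h2 h3
  simp at h1 h2 h3
  apply Quaternion.ext <;>
    simp only [Quaternion.re_sub, Quaternion.imI_sub, Quaternion.imJ_sub, Quaternion.imK_sub,
      Quaternion.re_mul, Quaternion.imI_mul, Quaternion.imJ_mul, Quaternion.imK_mul,
      Quaternion.re_smul, Quaternion.imI_smul, Quaternion.imJ_smul, Quaternion.imK_smul,
      Quaternion.re_zero, Quaternion.imI_zero, Quaternion.imJ_zero, Quaternion.imK_zero,
      smul_eq_mul]
  · linear_combination (-(v.re*u.re - v.imI*u.imI - v.imJ*u.imJ - v.imK*u.imK)) * hci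
  · linear_combination 2*h1 - (v.re*u.imI + v.imI*u.re + v.imJ*u.imK - v.imK*u.imJ) * hci
  · linear_combination 2*h2 - (v.re*u.imJ - v.imI*u.imK + v.imJ*u.re + v.imK*u.imI) * hci
  · linear_combination 2*h3 - (v.re*u.imK + v.imI*u.imJ - v.imJ*u.imI + v.imK*u.re) * hci

end Aux

/-- if ρ is harmonic and ∇f × ∇ρ = 0, then F = (1/f)Dρ solves
    DF + F·(Df/f) = 0 and G = fDρ solves DG − G·(Df/f) = 0. -/
theorem statement17 (Ω : Set P3) (hΩ : IsOpen Ω)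
    (f : P3 → ℂ) (hf : ContDiffOn ℝ 1 f Ω) (hf0 : ∀ p ∈ Ω, f p ≠ 0)
    (ρ : P3 → ℝ) (hρ : ContDiffOn ℝ 2 ρ Ω)
    (hharm : ∀ p ∈ Ω, lap3 (fun x => (ρ x : ℂ)) p = 0)
    (hpar : ∀ p ∈ Ω, crossq (gradq f p) (gradq (fun x => (ρ x : ℂ)) p) = 0) :
    ∀ p ∈ Ω,
      (Dq (fun x => (f x)⁻¹ • gradq (fun y => (ρ y : ℂ)) x) p
          + ((f p)⁻¹ • gradq (fun y => (ρ y : ℂ)) p) * DfF f p = 0) ∧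
      (Dq (fun x => f x • gradq (fun y => (ρ y : ℂ)) x) p
          - (f p • gradq (fun y => (ρ y : ℂ)) p) * DfF f p = 0) := by
  intro p hp
  have hmem : Ω ∈ nhds p := hΩ.mem_nhds hp
  set ρc : P3 → ℂ := fun x => ((ρ x : ℝ) : ℂ) with hρcdef
  -- differentiability facts
  have hfa : ContDiffAt ℝ 1 f p := hf.contDiffAt hmem
  have hfd : DifferentiableAt ℝ f p := hfa.differentiableAt one_ne_zero
  have h0 : f p ≠ 0 := hf0 p hp
  have hinvd : DifferentiableAt ℝ (fun x => (f x)⁻¹) p := hfd.inv h0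
  have hρr : ContDiffAt ℝ 2 ρ p := hρ.contDiffAt hmem
  have hρa : ContDiffAt ℝ 2 ρc p := Complex.ofRealCLM.contDiff.contDiffAt.comp p hρr
  have hfder : ContDiffAt ℝ 1 (fderiv ℝ ρc) p := hρa.fderiv_right (by norm_num)
  have hdd : DifferentiableAt ℝ (fderiv ℝ ρc) p := hfder.differentiableAt one_ne_zero
  have hbdiff : ∀ j : Fin 3, DifferentiableAt ℝ (pd j ρc) p := by
    intro j; unfold pd; exact hdd.clm_apply (differentiableAt_const _)
  have hpd2 : ∀ j k : Fin 3, pd k (pd j ρc) p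
      = fderiv ℝ (fderiv ℝ ρc) p (EuclideanSpace.single k 1) (EuclideanSpace.single j 1) := by
    intro j k; unfold pd
    rw [fderiv_clm_apply hdd (differentiableAt_const _)]
    simp
  have hsymm : ∀ j k : Fin 3, pd k (pd j ρc) p = pd j (pd k ρc) p := by
    intro j k
    rw [hpd2, hpd2]
    exact (hρa.isSymmSndFDerivAt (by norm_num)) _ _
  have hlap : pd 0 (pd 0 ρc) p + pd 1 (pd 1 ρc) p + pd 2 (pd 2 ρc) p = 0 := by
    have := hharm p hp
    unfold lap3 at this
    rwa [Fin.sum_univ_three] at this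
  -- the key computation : D(g • ∇ρ) = (∇g) (∇ρ)
  have hDq : ∀ g : P3 → ℂ, DifferentiableAt ℝ g p →
      Dq (fun x => g x • gradq ρc x) p = gradq g p * gradq ρc p := by
    intro g hg
    have hcomp : ∀ k : Fin 3, pdq k (fun x => g x • gradq ρc x) p =
        ⟨0, g p * pd k (pd 0 ρc) p + pd k g p * pd 0 ρc p,
            g p * pd k (pd 1 ρc) p + pd k g p * pd 1 ρc p,
            g p * pd k (pd 2 ρc) p + pd k g p * pd 2 ρc p⟩ := by
      intro k
      unfold pdq
      have hre : (fun x => ((g x • gradq ρc x : ℍ[ℂ])).re) = fun _ => (0:ℂ) := by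
        funext x; show g x • (0:ℂ) = 0; simp
      have hI : (fun x => ((g x • gradq ρc x : ℍ[ℂ])).imI) = fun x => g x * pd 0 ρc x := by
        funext x; rfl
      have hJ : (fun x => ((g x • gradq ρc x : ℍ[ℂ])).imJ) = fun x => g x * pd 1 ρc x := by
        funext x; rfl
      have hK : (fun x => ((g x • gradq ρc x : ℍ[ℂ])).imK) = fun x => g x * pd 2 ρc x := by
        funext x; rfl
      rw [hre, hI, hJ, hK]
      rw [pd_mul_aux g _ p hg (hbdiff 0) k, pd_mul_aux g _ p hg (hbdiff 1) k,
        pd_mul_aux g _ p hg (hbdiff 2) k]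
      have : pd k (fun _ => (0:ℂ)) p = 0 := by
        unfold pd; simp
      rw [this]
    unfold Dq
    rw [Fin.sum_univ_three, hcomp 0, hcomp 1, hcomp 2]
    apply Quaternion.ext
    · erw [Quaternion.re_add, Quaternion.re_add, Quaternion.re_mul, Quaternion.re_mul, Quaternion.re_mul, Quaternion.re_mul]
      simp only [qe, gradq, Matrix.cons_val_zero, Matrix.cons_val_one, Matrix.head_cons,
        Matrix.cons_val_two, Matrix.tail_cons, Quaternion.re_add, Quaternion.re_mul,
        Matrix.cons_val, QuaternionAlgebra.re_add, QuaternionAlgebra.re_mul]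
      linear_combination (-(g p)) * hlap
    · erw [Quaternion.imI_add, Quaternion.imI_add, Quaternion.imI_mul, Quaternion.imI_mul, Quaternion.imI_mul, Quaternion.imI_mul]
      simp only [qe, gradq, Matrix.cons_val_zero, Matrix.cons_val_one, Matrix.head_cons,
        Matrix.cons_val_two, Matrix.tail_cons, Quaternion.imI_add, Quaternion.imI_mul,
        Matrix.cons_val, QuaternionAlgebra.imI_add, QuaternionAlgebra.imI_mul]
      linear_combination (g p) * hsymm 2 1
    · erw [Quaternion.imJ_add, Quaternion.imJ_add, Quaternion.imJ_mul, Quaternion.imJ_mul, Quaternion.imJ_mul, Quaternion.imJ_mul]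
      simp only [qe, gradq, Matrix.cons_val_zero, Matrix.cons_val_one, Matrix.head_cons,
        Matrix.cons_val_two, Matrix.tail_cons, Quaternion.imJ_add, Quaternion.imJ_mul,
        Matrix.cons_val, QuaternionAlgebra.imJ_add, QuaternionAlgebra.imJ_mul]
      linear_combination (g p) * hsymm 0 2
    · erw [Quaternion.imK_add, Quaternion.imK_add, Quaternion.imK_mul, Quaternion.imK_mul, Quaternion.imK_mul, Quaternion.imK_mul]
      simp only [qe, gradq, Matrix.cons_val_zero, Matrix.cons_val_one, Matrix.head_cons,
        Matrix.cons_val_two, Matrix.tail_cons, Quaternion.imK_add, Quaternion.imK_mul,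
        Matrix.cons_val, QuaternionAlgebra.imK_add, QuaternionAlgebra.imK_mul]
      linear_combination (g p) * hsymm 1 0
  have hcr : crossq (gradq f p) (gradq ρc p) = 0 := hpar p hp
  have hcomm : gradq f p * gradq ρc p = gradq ρc p * gradq f p := quat_comm_aux _ _ hcr
  have hgradinv : gradq (fun x => (f x)⁻¹) p = (-((f p)⁻¹ * (f p)⁻¹)) • gradq f p := by
    apply Quaternion.ext <;>
      simp only [Quaternion.re_smul, Quaternion.imI_smul, Quaternion.imJ_smul, Quaternion.imK_smul] <;>
      simp [gradq, pd_inv_aux f p hfd h0, smul_eq_mul]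
  constructor
  · rw [hDq _ hinvd, hgradinv]
    simp only [DfF]
    exact final1_aux ((f p)⁻¹) (gradq f p) (gradq ρc p) hcr
  · rw [hDq _ hfd]
    simp only [DfF]
    exact final2_aux (f p) ((f p)⁻¹) (mul_inv_cancel₀ h0) (gradq f p) (gradq ρc p) hcr
end
end
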